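/- arXiv:1212.2324 — 5 statements merged into one kernel-verified Lean document; each statement's English description precedes it below -/
import Mathlib

section
/- For 0 ≤ N and r ≥ 1, the multiple stochastic integral I^r(f_r) is F_N-measurable if and only if f_r 1_{[0,N]^r} = f_r (as elements of L²(Δ_r)). -/
open MeasureTheory Finset

noncomputable section

/-- `F_{n-1}`, with the convention that `F_{-1}` is the trivial σ-algebra. -/
def Fprev {Ω : Type*} (F : ℕ → MeasurableSpace Ω) : ℕ → MeasurableSpace Ω
  | 0 => ⊥
  | n + 1 => F n

/-- The discrete multiple stochastic integral `I^r(f)` of a function on `Δ_r`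
(encoded as a function on all tuples, vanishing off the injective ones). -/
def multInt {Ω : Type*} (d r : ℕ) (Y : ℕ → Ω → Fin d → ℝ)
    (f : (Fin r → ℕ) → (Fin r → Fin d) → ℝ) (ω : Ω) : ℝ :=
  ∑' i : Fin r → ℕ, ∑' k : Fin r → Fin d,
    (if Function.Injective i then f i k * ∏ t, Y (i t) ω (k t) else 0)

namespace Stmt5Aux

open Function

variable {Ω : Type*} [m : MeasurableSpace Ω] {μ : Measure Ω} [IsProbabilityMeasure μ]
  {d : ℕ} {F : ℕ → MeasurableSpace Ω} {Y : ℕ → Ω → Fin d → ℝ}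

/-- bounded measurable real functions -/
def BM (μ : Measure Ω) (X : Ω → ℝ) : Prop :=
  Measurable X ∧ ∃ C, ∀ ω, |X ω| ≤ C

theorem BM.integrable {X : Ω → ℝ} (h : BM μ X) : Integrable X μ := by
  obtain ⟨hm, C, hC⟩ := h
  exact (integrable_const C).mono' hm.aestronglyMeasurable
    (ae_of_all _ fun ω => by simpa [Real.norm_eq_abs] using hC ω)

theorem BM.mul {X Z : Ω → ℝ} (hX : BM μ X) (hZ : BM μ Z) :
    BM μ (fun ω => X ω * Z ω) := by
  obtain ⟨hm1, C1, hC1⟩ := hX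
  obtain ⟨hm2, C2, hC2⟩ := hZ
  refine ⟨hm1.mul hm2, C1 * C2, fun ω => ?_⟩
  rw [abs_mul]
  exact mul_le_mul (hC1 ω) (hC2 ω) (abs_nonneg _) ((abs_nonneg _).trans (hC1 ω))

theorem BM.const_mul {X : Ω → ℝ} (hX : BM μ X) (c : ℝ) :
    BM μ (fun ω => c * X ω) := by
  obtain ⟨hm1, C1, hC1⟩ := hX
  exact ⟨measurable_const.mul hm1, |c| * C1, fun ω => by
    rw [abs_mul]; exact mul_le_mul_of_nonneg_left (hC1 ω) (abs_nonneg _)⟩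

theorem BM.sum {ι : Type*} {s : Finset ι} {g : ι → Ω → ℝ}
    (h : ∀ i ∈ s, BM μ (g i)) : BM μ (fun ω => ∑ i ∈ s, g i ω) := by
  classical
  refine ⟨Finset.measurable_sum s fun i hi => (h i hi).1, ?_⟩
  choose C hC using fun i (hi : i ∈ s) => (h i hi).2
  refine ⟨∑ i ∈ s.attach, C i i.2, fun ω => ?_⟩
  simp only
  rw [← Finset.sum_attach s (fun i => g i ω)]
  exact (Finset.abs_sum_le_sum_abs _ _).trans
    (Finset.sum_le_sum fun i _ => hC i i.2 ω)

theorem BM_const (c : ℝ) : BM μ (fun _ => c) :=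
  ⟨measurable_const, |c|, fun _ => le_rfl⟩

theorem BM_Y (hFle : ∀ n, F n ≤ m) (hYbd : ∀ n, ∃ C, ∀ ω i, |Y n ω i| ≤ C)
    (hYadp : ∀ n i, Measurable[F n] fun ω => Y n ω i) (n : ℕ) (κ : Fin d) :
    BM μ (fun ω => Y n ω κ) := by
  obtain ⟨C, hC⟩ := hYbd n
  exact ⟨(hYadp n κ).mono (hFle n) le_rfl, C, fun ω => hC ω κ⟩

theorem BM_prod {ι : Type*} {s : Finset ι} {g : ι → Ω → ℝ}
    (h : ∀ i ∈ s, BM μ (g i)) : BM μ (fun ω => ∏ i ∈ s, g i ω) := by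
  classical
  induction s using Finset.induction with
  | empty => simpa using BM_const (μ := μ) 1
  | @insert a s hx ih =>
    simp only [Finset.prod_insert hx]
    exact (h a (Finset.mem_insert_self a s)).mul
      (ih fun i hi => h i (Finset.mem_insert_of_mem hi))
theorem sm_prev (hFle : ∀ n, F n ≤ m) : ∀ n, Fprev F n ≤ m
  | 0 => bot_le
  | n + 1 => hFle n

/-- Pull-out conditioning: integrating against a single increment gives zero. -/
theorem zero_int (hFle : ∀ n, F n ≤ m)
    (hY0 : ∀ n i, μ[fun ω => Y n ω i | Fprev F n] =ᵐ[μ] fun _ => 0)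
    (n : ℕ) (κ : Fin d) (X : Ω → ℝ)
    (hX : StronglyMeasurable[Fprev F n] X) (hXi : Integrable X μ)
    (hYi : Integrable (fun ω => Y n ω κ) μ)
    (hXYi : Integrable (fun ω => X ω * Y n ω κ) μ) :
    ∫ ω, X ω * Y n ω κ ∂μ = 0 := by
  have hm' : Fprev F n ≤ m := sm_prev hFle n
  haveI : SigmaFinite (μ.trim hm') := inferInstance
  have h1 : μ[X * (fun ω => Y n ω κ) | Fprev F n]
      =ᵐ[μ] X * μ[(fun ω => Y n ω κ) | Fprev F n] :=
    condExp_mul_of_stronglyMeasurable_left hX hXYi hYi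
  have h2 : X * μ[(fun ω => Y n ω κ) | Fprev F n] =ᵐ[μ] fun _ => (0 : ℝ) := by
    filter_upwards [hY0 n κ] with ω hω
    simp [Pi.mul_apply, hω]
  calc ∫ ω, X ω * Y n ω κ ∂μ
      = ∫ ω, (μ[X * (fun ω => Y n ω κ) | Fprev F n]) ω ∂μ :=
        (integral_condExp hm').symm
    _ = ∫ _ω, (0 : ℝ) ∂μ := integral_congr_ae (h1.trans h2)
    _ = 0 := integral_zero _ _

/-- Pull-out conditioning for a product of two increments at the same time. -/
theorem pair_int (hFle : ∀ n, F n ≤ m)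
    (hY2 : ∀ n i j, μ[fun ω => Y n ω i * Y n ω j | Fprev F n] =ᵐ[μ]
      fun _ => if i = j then (1 : ℝ) else 0)
    (n : ℕ) (κ₁ κ₂ : Fin d) (X : Ω → ℝ)
    (hX : StronglyMeasurable[Fprev F n] X) (hXi : Integrable X μ)
    (hWi : Integrable (fun ω => Y n ω κ₁ * Y n ω κ₂) μ)
    (hXWi : Integrable (fun ω => X ω * (Y n ω κ₁ * Y n ω κ₂)) μ) :
    ∫ ω, X ω * (Y n ω κ₁ * Y n ω κ₂) ∂μ
      = (if κ₁ = κ₂ then (1 : ℝ) else 0) * ∫ ω, X ω ∂μ := by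
  have hm' : Fprev F n ≤ m := sm_prev hFle n
  haveI : SigmaFinite (μ.trim hm') := inferInstance
  have h1 : μ[X * (fun ω => Y n ω κ₁ * Y n ω κ₂) | Fprev F n]
      =ᵐ[μ] X * μ[(fun ω => Y n ω κ₁ * Y n ω κ₂) | Fprev F n] :=
    condExp_mul_of_stronglyMeasurable_left hX hXWi hWi
  have h2 : X * μ[(fun ω => Y n ω κ₁ * Y n ω κ₂) | Fprev F n]
      =ᵐ[μ] fun ω => X ω * (if κ₁ = κ₂ then (1 : ℝ) else 0) := by
    filter_upwards [hY2 n κ₁ κ₂] with ω hω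
    simp [Pi.mul_apply, hω]
  calc ∫ ω, X ω * (Y n ω κ₁ * Y n ω κ₂) ∂μ
      = ∫ ω, (μ[X * (fun ω => Y n ω κ₁ * Y n ω κ₂) | Fprev F n]) ω ∂μ :=
        (integral_condExp hm').symm
    _ = ∫ ω, X ω * (if κ₁ = κ₂ then (1 : ℝ) else 0) ∂μ :=
        integral_congr_ae (h1.trans h2)
    _ = (if κ₁ = κ₂ then (1 : ℝ) else 0) * ∫ ω, X ω ∂μ := by
        rw [integral_mul_const, mul_comm]
theorem meas_prod_prev (hFmono : Monotone F)
    (hYadp : ∀ n i, Measurable[F n] fun ω => Y n ω i)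
    {M : ℕ} {s : Finset ℕ} {k : ℕ → Fin d} (h : ∀ n ∈ s, n < M) :
    Measurable[Fprev F M] (fun ω => ∏ n ∈ s, Y n ω (k n)) := by
  cases M with
  | zero =>
    have hs : s = ∅ := Finset.eq_empty_of_forall_notMem fun n hn => Nat.not_lt_zero n (h n hn)
    subst hs; simpa using @measurable_const ℝ Ω _ (Fprev F 0) 1
  | succ M' =>
    exact Finset.measurable_prod s fun n hn =>
      (hYadp n (k n)).mono (hFmono (Nat.lt_succ_iff.mp (h n hn))) le_rfl

theorem erase_lt {M : ℕ} {s : Finset ℕ} (h : ∀ n ∈ s, n < M + 1) :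
    ∀ n ∈ s.erase M, n < M := fun n hn =>
  Nat.lt_of_le_of_ne (Nat.lt_succ_iff.mp (h n (Finset.mem_of_mem_erase hn)))
    (Finset.ne_of_mem_erase hn)

/-- The fundamental moment computation. -/
theorem moments (hFle : ∀ n, F n ≤ m) (hFmono : Monotone F)
    (hYadp : ∀ n i, Measurable[F n] fun ω => Y n ω i)
    (hYbd : ∀ n, ∃ C, ∀ ω i, |Y n ω i| ≤ C)
    (hY0 : ∀ n i, μ[fun ω => Y n ω i | Fprev F n] =ᵐ[μ] fun _ => 0)
    (hY2 : ∀ n i j, μ[fun ω => Y n ω i * Y n ω j | Fprev F n] =ᵐ[μ]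
      fun _ => if i = j then (1 : ℝ) else 0) :
    ∀ (M : ℕ) (A B : Finset ℕ) (ka kb : ℕ → Fin d), (∀ n ∈ A, n < M) → (∀ n ∈ B, n < M) →
    ∫ ω, (∏ n ∈ A, Y n ω (ka n)) * ∏ n ∈ B, Y n ω (kb n) ∂μ
      = if A = B ∧ ∀ n ∈ A, ka n = kb n then 1 else 0 := by
  have hBMY := BM_Y (μ := μ) hFle hYbd hYadp
  have hBMprod : ∀ (s : Finset ℕ) (k : ℕ → Fin d), BM μ (fun ω => ∏ n ∈ s, Y n ω (k n)) :=
    fun s k => BM_prod fun n _ => hBMY n (k n)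
  intro M
  induction M with
  | zero =>
    intro A B ka kb hA hB
    have hA' : A = ∅ := Finset.eq_empty_of_forall_notMem fun n hn => Nat.not_lt_zero n (hA n hn)
    have hB' : B = ∅ := Finset.eq_empty_of_forall_notMem fun n hn => Nat.not_lt_zero n (hB n hn)
    subst hA'; subst hB'
    simp
  | succ M ih =>
    intro A B ka kb hA hB
    by_cases hMA : M ∈ A <;> by_cases hMB : M ∈ B
    · -- M in both
      have key : ∫ ω, (∏ n ∈ A, Y n ω (ka n)) * ∏ n ∈ B, Y n ω (kb n) ∂μ
          = ∫ ω, ((∏ n ∈ A.erase M, Y n ω (ka n)) * ∏ n ∈ B.erase M, Y n ω (kb n))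
              * (Y M ω (ka M) * Y M ω (kb M)) ∂μ := by
        apply integral_congr_ae; apply Filter.EventuallyEq.of_eq; funext ω
        rw [← Finset.mul_prod_erase A _ hMA, ← Finset.mul_prod_erase B _ hMB]; ring
      have hX : StronglyMeasurable[Fprev F M]
          (fun ω => (∏ n ∈ A.erase M, Y n ω (ka n)) * ∏ n ∈ B.erase M, Y n ω (kb n)) :=
        (Measurable.mul (meas_prod_prev hFmono hYadp (erase_lt hA))
          (meas_prod_prev hFmono hYadp (erase_lt hB))).stronglyMeasurable
      have hXbm : BM μ (fun ω => (∏ n ∈ A.erase M, Y n ω (ka n)) * ∏ n ∈ B.erase M, Y n ω (kb n)) :=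
        (hBMprod _ _).mul (hBMprod _ _)
      rw [key, pair_int hFle hY2 M (ka M) (kb M) _ hX hXbm.integrable
        ((hBMY M (ka M)).mul (hBMY M (kb M))).integrable
        (hXbm.mul ((hBMY M (ka M)).mul (hBMY M (kb M)))).integrable,
        ih (A.erase M) (B.erase M) ka kb (erase_lt hA) (erase_lt hB)]
      have hiff : (A = B ∧ ∀ n ∈ A, ka n = kb n) ↔
          (ka M = kb M ∧ (A.erase M = B.erase M ∧ ∀ n ∈ A.erase M, ka n = kb n)) := by
        constructor
        · rintro ⟨h1, h2⟩
          exact ⟨h2 M hMA, by rw [h1], fun n hn => h2 n (Finset.mem_of_mem_erase hn)⟩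
        · rintro ⟨h0, h1, h2⟩
          have hAB : A = B := by
            rw [← Finset.insert_erase hMA, ← Finset.insert_erase hMB, h1]
          refine ⟨hAB, fun n hn => ?_⟩
          rcases eq_or_ne n M with rfl | hne
          · exact h0
          · exact h2 n (Finset.mem_erase.mpr ⟨hne, hn⟩)
      by_cases hc : A = B ∧ ∀ n ∈ A, ka n = kb n
      · rw [if_pos hc]
        obtain ⟨c0, c1, c2⟩ := hiff.mp hc
        rw [if_pos c0, if_pos ⟨c1, c2⟩]; norm_num
      · rw [if_neg hc]
        rcases Decidable.not_and_iff_or_not.mp (fun h => hc (hiff.mpr h)) with h | h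
        · rw [if_neg h]; ring
        · rw [if_neg h]; ring
    · -- M in A only
      have key : ∫ ω, (∏ n ∈ A, Y n ω (ka n)) * ∏ n ∈ B, Y n ω (kb n) ∂μ
          = ∫ ω, ((∏ n ∈ A.erase M, Y n ω (ka n)) * ∏ n ∈ B, Y n ω (kb n))
              * Y M ω (ka M) ∂μ := by
        apply integral_congr_ae; apply Filter.EventuallyEq.of_eq; funext ω
        rw [← Finset.mul_prod_erase A _ hMA]; ring
      have hBlt : ∀ n ∈ B, n < M := fun n hn =>
        Nat.lt_of_le_of_ne (Nat.lt_succ_iff.mp (hB n hn)) (fun h => hMB (h ▸ hn))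
      have hX : StronglyMeasurable[Fprev F M]
          (fun ω => (∏ n ∈ A.erase M, Y n ω (ka n)) * ∏ n ∈ B, Y n ω (kb n)) :=
        (Measurable.mul (meas_prod_prev hFmono hYadp (erase_lt hA))
          (meas_prod_prev hFmono hYadp hBlt)).stronglyMeasurable
      have hXbm : BM μ (fun ω => (∏ n ∈ A.erase M, Y n ω (ka n)) * ∏ n ∈ B, Y n ω (kb n)) :=
        (hBMprod _ _).mul (hBMprod _ _)
      rw [key, zero_int hFle hY0 M (ka M) _ hX hXbm.integrable (hBMY M (ka M)).integrable
        (hXbm.mul (hBMY M (ka M))).integrable]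
      rw [if_neg]
      rintro ⟨h1, -⟩; exact hMB (h1 ▸ hMA)
    · -- M in B only
      have key : ∫ ω, (∏ n ∈ A, Y n ω (ka n)) * ∏ n ∈ B, Y n ω (kb n) ∂μ
          = ∫ ω, ((∏ n ∈ A, Y n ω (ka n)) * ∏ n ∈ B.erase M, Y n ω (kb n))
              * Y M ω (kb M) ∂μ := by
        apply integral_congr_ae; apply Filter.EventuallyEq.of_eq; funext ω
        rw [← Finset.mul_prod_erase B _ hMB]; ring
      have hAlt : ∀ n ∈ A, n < M := fun n hn =>
        Nat.lt_of_le_of_ne (Nat.lt_succ_iff.mp (hA n hn)) (fun h => hMA (h ▸ hn))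
      have hX : StronglyMeasurable[Fprev F M]
          (fun ω => (∏ n ∈ A, Y n ω (ka n)) * ∏ n ∈ B.erase M, Y n ω (kb n)) :=
        (Measurable.mul (meas_prod_prev hFmono hYadp hAlt)
          (meas_prod_prev hFmono hYadp (erase_lt hB))).stronglyMeasurable
      have hXbm : BM μ (fun ω => (∏ n ∈ A, Y n ω (ka n)) * ∏ n ∈ B.erase M, Y n ω (kb n)) :=
        (hBMprod _ _).mul (hBMprod _ _)
      rw [key, zero_int hFle hY0 M (kb M) _ hX hXbm.integrable (hBMY M (kb M)).integrable
        (hXbm.mul (hBMY M (kb M))).integrable]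
      rw [if_neg]
      rintro ⟨h1, -⟩; exact hMA (h1.symm ▸ hMB)
    · -- M in neither
      have hAlt : ∀ n ∈ A, n < M := fun n hn =>
        Nat.lt_of_le_of_ne (Nat.lt_succ_iff.mp (hA n hn)) (fun h => hMA (h ▸ hn))
      have hBlt : ∀ n ∈ B, n < M := fun n hn =>
        Nat.lt_of_le_of_ne (Nat.lt_succ_iff.mp (hB n hn)) (fun h => hMB (h ▸ hn))
      exact ih A B ka kb hAlt hBlt
theorem prod_fin_eq {r : ℕ} [Nonempty (Fin r)] (a : Fin r → ℕ) (ha : Injective a)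
    (k : Fin r → Fin d) [Nonempty (Fin d)] (ω : Ω) :
    ∏ t, Y (a t) ω (k t) = ∏ n ∈ Finset.image a Finset.univ, Y n ω ((k ∘ invFun a) n) := by
  rw [Finset.prod_image (fun x _ y _ h => ha h)]
  refine Finset.prod_congr rfl fun t _ => ?_
  rw [Function.comp_apply, Function.leftInverse_invFun ha t]

theorem moments_fin (hFle : ∀ n, F n ≤ m) (hFmono : Monotone F)
    (hYadp : ∀ n i, Measurable[F n] fun ω => Y n ω i)
    (hYbd : ∀ n, ∃ C, ∀ ω i, |Y n ω i| ≤ C)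
    (hY0 : ∀ n i, μ[fun ω => Y n ω i | Fprev F n] =ᵐ[μ] fun _ => 0)
    (hY2 : ∀ n i j, μ[fun ω => Y n ω i * Y n ω j | Fprev F n] =ᵐ[μ]
      fun _ => if i = j then (1 : ℝ) else 0)
    {r : ℕ} [Nonempty (Fin r)] [Nonempty (Fin d)]
    (a b : Fin r → ℕ) (ha : Injective a) (hb : Injective b)
    (k kb : Fin r → Fin d) :
    ∫ ω, (∏ t, Y (a t) ω (k t)) * ∏ t, Y (b t) ω (kb t) ∂μ
      = if ∃ σ : Equiv.Perm (Fin r), a = b ∘ σ ∧ k = kb ∘ σ then 1 else 0 := by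
  classical
  set M : ℕ := (Finset.univ.sup a) + (Finset.univ.sup b) + 1 with hM
  have hA : ∀ n ∈ Finset.image a Finset.univ, n < M := by
    intro n hn
    obtain ⟨t, -, rfl⟩ := Finset.mem_image.mp hn
    have := Finset.le_sup (f := a) (Finset.mem_univ t)
    omega
  have hB : ∀ n ∈ Finset.image b Finset.univ, n < M := by
    intro n hn
    obtain ⟨t, -, rfl⟩ := Finset.mem_image.mp hn
    have := Finset.le_sup (f := b) (Finset.mem_univ t)
    omega
  have key : ∫ ω, (∏ t, Y (a t) ω (k t)) * ∏ t, Y (b t) ω (kb t) ∂μ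
      = ∫ ω, (∏ n ∈ Finset.image a Finset.univ, Y n ω ((k ∘ invFun a) n))
          * ∏ n ∈ Finset.image b Finset.univ, Y n ω ((kb ∘ invFun b) n) ∂μ := by
    apply integral_congr_ae; apply Filter.EventuallyEq.of_eq; funext ω
    rw [prod_fin_eq a ha k ω, prod_fin_eq b hb kb ω]
  rw [key, moments hFle hFmono hYadp hYbd hY0 hY2 M _ _ _ _ hA hB]
  congr 1
  apply propext
  constructor
  · rintro ⟨h1, h2⟩
    have hmem : ∀ t, ∃ s, b s = a t := by
      intro t
      have : a t ∈ Finset.image b Finset.univ := h1 ▸ Finset.mem_image_of_mem a (Finset.mem_univ t)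
      obtain ⟨s, -, hs⟩ := Finset.mem_image.mp this
      exact ⟨s, hs⟩
    set σ₀ : Fin r → Fin r := fun t => invFun b (a t) with hσ₀
    have hbσ : ∀ t, b (σ₀ t) = a t := fun t => Function.invFun_eq (hmem t)
    have hσinj : Injective σ₀ := fun t t' h => ha (by rw [← hbσ t, ← hbσ t', h])
    have hσbij : Function.Bijective σ₀ := Finite.injective_iff_bijective.mp hσinj
    refine ⟨Equiv.ofBijective σ₀ hσbij, funext fun t => ?_, funext fun t => ?_⟩
    · exact (hbσ t).symm
    · have hmatch := h2 (a t) (Finset.mem_image_of_mem a (Finset.mem_univ t))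
      simp only [Function.comp_apply] at hmatch ⊢
      rw [Function.leftInverse_invFun ha t] at hmatch
      rw [Equiv.ofBijective_apply]
      rw [hmatch]
  · rintro ⟨σ, rfl, rfl⟩
    constructor
    · ext n
      simp only [Finset.mem_image, Finset.mem_univ, true_and, Function.comp_apply]
      constructor
      · rintro ⟨t, rfl⟩; exact ⟨σ t, rfl⟩
      · rintro ⟨t, rfl⟩; exact ⟨σ.symm t, by simp⟩
    · intro n hn
      obtain ⟨t, -, rfl⟩ := Finset.mem_image.mp hn
      have h1 : invFun (b ∘ σ) ((b ∘ σ) t) = t := Function.leftInverse_invFun (hb.comp σ.injective) t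
      have h2 : invFun b (b (σ t)) = σ t := Function.leftInverse_invFun hb (σ t)
      simp only [Function.comp_apply] at h1 h2 ⊢
      rw [h1, h2]
/-- The finite-sum representation of the multiple integral. -/
theorem multInt_eq {r : ℕ} {f : (Fin r → ℕ) → (Fin r → Fin d) → ℝ} {M : ℕ}
    (hsupp : ∀ i k, (∃ t, M ≤ i t) → f i k = 0) (ω : Ω) :
    multInt d r Y f ω
      = ∑ i ∈ Fintype.piFinset (fun _ : Fin r => Finset.range M),
          ∑ k : Fin r → Fin d,
            (if Function.Injective i then f i k * ∏ t, Y (i t) ω (k t) else 0) := by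
  classical
  unfold multInt
  have h1 : ∀ i : Fin r → ℕ,
      (∑' k : Fin r → Fin d,
        (if Function.Injective i then f i k * ∏ t, Y (i t) ω (k t) else 0))
      = ∑ k : Fin r → Fin d,
          (if Function.Injective i then f i k * ∏ t, Y (i t) ω (k t) else 0) :=
    fun i => tsum_fintype _
  simp only [h1]
  apply tsum_eq_sum
  intro i hi
  have : ∃ t, M ≤ i t := by
    simp only [Fintype.mem_piFinset, Finset.mem_range] at hi
    push_neg at hi
    obtain ⟨t, ht⟩ := hi
    exact ⟨t, ht⟩
  apply Finset.sum_eq_zero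
  intro k _
  rw [hsupp i k this]
  simp

theorem BM_multInt (hFle : ∀ n, F n ≤ m) (hYadp : ∀ n i, Measurable[F n] fun ω => Y n ω i)
    (hYbd : ∀ n, ∃ C, ∀ ω i, |Y n ω i| ≤ C)
    {r : ℕ} {f : (Fin r → ℕ) → (Fin r → Fin d) → ℝ} {M : ℕ}
    (hsupp : ∀ i k, (∃ t, M ≤ i t) → f i k = 0) :
    BM μ (multInt d r Y f) := by
  classical
  have : multInt d r Y f = fun ω =>
      ∑ i ∈ Fintype.piFinset (fun _ : Fin r => Finset.range M),
        ∑ k : Fin r → Fin d,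
          (if Function.Injective i then f i k * ∏ t, Y (i t) ω (k t) else 0) :=
    funext fun ω => multInt_eq hsupp ω
  rw [this]
  apply BM.sum; intro i _
  apply BM.sum; intro k _
  by_cases hinj : Function.Injective i
  · simp only [if_pos hinj]
    exact (BM_prod (fun t _ => BM_Y hFle hYbd hYadp (i t) (k t))).const_mul (f i k)
  · simp only [if_neg hinj]
    exact BM_const 0

/-- Pairing of the multiple integral against a product of increments. -/
theorem pairing (hFle : ∀ n, F n ≤ m) (hFmono : Monotone F)
    (hYadp : ∀ n i, Measurable[F n] fun ω => Y n ω i)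
    (hYbd : ∀ n, ∃ C, ∀ ω i, |Y n ω i| ≤ C)
    (hY0 : ∀ n i, μ[fun ω => Y n ω i | Fprev F n] =ᵐ[μ] fun _ => 0)
    (hY2 : ∀ n i j, μ[fun ω => Y n ω i * Y n ω j | Fprev F n] =ᵐ[μ]
      fun _ => if i = j then (1 : ℝ) else 0)
    {r : ℕ} [Nonempty (Fin r)] [Nonempty (Fin d)]
    {f : (Fin r → ℕ) → (Fin r → Fin d) → ℝ}
    (hfsymm : ∀ (σ : Equiv.Perm (Fin r)) i k, f (i ∘ σ) (k ∘ σ) = f i k)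
    {N₀ : ℕ} (hsupp : ∀ i k, (∃ t, N₀ ≤ i t) → f i k = 0)
    (b : Fin r → ℕ) (hb : Injective b) (kb : Fin r → Fin d) :
    ∫ ω, multInt d r Y f ω * ∏ t, Y (b t) ω (kb t) ∂μ
      = (r.factorial : ℝ) * f b kb := by
  classical
  set M : ℕ := N₀ + (Finset.univ.sup b) + 1 with hM
  have hsupp' : ∀ i k, (∃ t, M ≤ i t) → f i k = 0 := by
    rintro i k ⟨t, ht⟩
    exact hsupp i k ⟨t, by omega⟩
  have hbT : ∀ (σ : Equiv.Perm (Fin r)),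
      (b ∘ σ) ∈ Fintype.piFinset (fun _ : Fin r => Finset.range M) := by
    intro σ
    simp only [Fintype.mem_piFinset, Finset.mem_range]
    intro t
    have := Finset.le_sup (f := b) (Finset.mem_univ (σ t))
    simp only [Function.comp_apply]
    omega
  set T := Fintype.piFinset (fun _ : Fin r => Finset.range M) with hT
  have hBMY := BM_Y (μ := μ) hFle hYbd hYadp
  have hBMprodb : BM μ (fun ω => ∏ t, Y (b t) ω (kb t)) :=
    BM_prod fun t _ => hBMY (b t) (kb t)
  -- step 1 : expand multInt and exchange sum/integral
  have step1 : ∫ ω, multInt d r Y f ω * ∏ t, Y (b t) ω (kb t) ∂μ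
      = ∑ i ∈ T, ∑ k : Fin r → Fin d,
          ∫ ω, (if Function.Injective i then f i k * ∏ t, Y (i t) ω (k t) else 0)
            * ∏ t, Y (b t) ω (kb t) ∂μ := by
    have e1 : ∀ ω, multInt d r Y f ω * ∏ t, Y (b t) ω (kb t)
        = ∑ i ∈ T, ∑ k : Fin r → Fin d,
            (if Function.Injective i then f i k * ∏ t, Y (i t) ω (k t) else 0)
              * ∏ t, Y (b t) ω (kb t) := by
      intro ω
      rw [multInt_eq hsupp' ω, Finset.sum_mul]
      exact Finset.sum_congr rfl fun i _ => by rw [Finset.sum_mul]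
    have hint : ∀ i ∈ T, ∀ (k : Fin r → Fin d), Integrable
        (fun ω => (if Function.Injective i then f i k * ∏ t, Y (i t) ω (k t) else 0)
          * ∏ t, Y (b t) ω (kb t)) μ := by
      intro i _ k
      by_cases hinj : Function.Injective i
      · simp only [if_pos hinj]
        exact (((BM_prod (fun t _ => hBMY (i t) (k t))).const_mul (f i k)).mul hBMprodb).integrable
      · simp only [if_neg hinj, zero_mul]
        exact integrable_zero _ _ _
    calc ∫ ω, multInt d r Y f ω * ∏ t, Y (b t) ω (kb t) ∂μ
        = ∫ ω, ∑ i ∈ T, ∑ k : Fin r → Fin d,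
            (if Function.Injective i then f i k * ∏ t, Y (i t) ω (k t) else 0)
              * ∏ t, Y (b t) ω (kb t) ∂μ := by
          apply integral_congr_ae; exact Filter.EventuallyEq.of_eq (funext e1)
      _ = ∑ i ∈ T, ∫ ω, ∑ k : Fin r → Fin d,
            (if Function.Injective i then f i k * ∏ t, Y (i t) ω (k t) else 0)
              * ∏ t, Y (b t) ω (kb t) ∂μ := by
          apply integral_finset_sum
          intro i hi
          exact integrable_finset_sum _ (fun k _ => hint i hi k)
      _ = ∑ i ∈ T, ∑ k : Fin r → Fin d,
          ∫ ω, (if Function.Injective i then f i k * ∏ t, Y (i t) ω (k t) else 0)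
            * ∏ t, Y (b t) ω (kb t) ∂μ :=
          Finset.sum_congr rfl fun i hi =>
            integral_finset_sum _ (fun k _ => hint i hi k)
  -- step 2 : evaluate each integral
  have step2 : ∀ i ∈ T, ∀ (k : Fin r → Fin d),
      ∫ ω, (if Function.Injective i then f i k * ∏ t, Y (i t) ω (k t) else 0)
        * ∏ t, Y (b t) ω (kb t) ∂μ
      = (if Function.Injective i then
          f i k * (if ∃ σ : Equiv.Perm (Fin r), i = b ∘ σ ∧ k = kb ∘ σ then 1 else 0)
        else 0) := by
    intro i _ k
    by_cases hinj : Function.Injective i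
    · simp only [if_pos hinj]
      rw [show (fun ω => f i k * (∏ t, Y (i t) ω (k t)) * ∏ t, Y (b t) ω (kb t))
          = fun ω => f i k * ((∏ t, Y (i t) ω (k t)) * ∏ t, Y (b t) ω (kb t)) by
            funext ω; ring]
      rw [integral_const_mul, moments_fin hFle hFmono hYadp hYbd hY0 hY2 i b hinj hb k kb]
    · simp only [if_neg hinj, zero_mul, integral_zero]
  rw [step1, Finset.sum_congr rfl (fun i hi => Finset.sum_congr rfl fun k _ => step2 i hi k)]
  -- step 3 : combinatorics
  rw [← Finset.sum_product']
  set G : (Fin r → ℕ) × (Fin r → Fin d) → ℝ := fun p =>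
    (if Function.Injective p.1 then
      f p.1 p.2 * (if ∃ σ : Equiv.Perm (Fin r), p.1 = b ∘ σ ∧ p.2 = kb ∘ σ then 1 else 0)
    else 0) with hG
  set S : Finset ((Fin r → ℕ) × (Fin r → Fin d)) :=
    Finset.image (fun σ : Equiv.Perm (Fin r) => (b ∘ σ, kb ∘ σ)) Finset.univ with hS
  have hSsub : S ⊆ T ×ˢ Finset.univ := by
    intro p hp
    obtain ⟨σ, -, rfl⟩ := Finset.mem_image.mp hp
    exact Finset.mem_product.mpr ⟨hbT σ, Finset.mem_univ _⟩
  have hzero : ∀ p ∈ T ×ˢ Finset.univ, p ∉ S → G p = 0 := by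
    rintro ⟨i, k⟩ - hp
    simp only [hG]
    by_cases hinj : Function.Injective i
    · rw [if_pos hinj]
      by_cases hex : ∃ σ : Equiv.Perm (Fin r), i = b ∘ σ ∧ k = kb ∘ σ
      · exfalso
        obtain ⟨σ, h1, h2⟩ := hex
        exact hp (Finset.mem_image.mpr ⟨σ, Finset.mem_univ _, by rw [← h1, ← h2]⟩)
      · rw [if_neg hex, mul_zero]
    · rw [if_neg hinj]
  have e3 : ∑ p ∈ T ×ˢ Finset.univ, G p = ∑ p ∈ S, G p :=
    (Finset.sum_subset hSsub hzero).symm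
  have e4 : ∑ p ∈ S, G p = ∑ σ : Equiv.Perm (Fin r), G (b ∘ σ, kb ∘ σ) := by
    rw [hS]
    apply Finset.sum_image
    intro σ _ τ _ h
    have h1 : b ∘ σ = b ∘ τ := congrArg Prod.fst h
    exact Equiv.ext fun t => hb (congrFun h1 t)
  have e5 : ∀ σ : Equiv.Perm (Fin r), G (b ∘ σ, kb ∘ σ) = f b kb := by
    intro σ
    simp only [hG]
    rw [if_pos (hb.comp σ.injective), if_pos ⟨σ, rfl, rfl⟩, mul_one]
    exact hfsymm σ b kb
  rw [e3, e4]
  simp only [e5]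
  rw [Finset.sum_const, Finset.card_univ, Fintype.card_perm, Fintype.card_fin,
    nsmul_eq_mul]

end Stmt5Aux

/-- for `r ≥ 1`, `I^r(f)` is `F_N`-measurable if and only if
`f 1_{[0,N]^r} = f` (i.e. `f` is supported on tuples with all entries `≤ N`). -/
theorem stmt_5 {Ω : Type*} [m : MeasurableSpace Ω] (μ : Measure Ω) [IsProbabilityMeasure μ]
    (d : ℕ) (F : ℕ → MeasurableSpace Ω) (hFle : ∀ n, F n ≤ m) (hFmono : Monotone F)
    (Y : ℕ → Ω → Fin d → ℝ)
    (hYadp : ∀ n i, Measurable[F n] fun ω => Y n ω i)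
    (hYbd : ∀ n, ∃ C, ∀ ω i, |Y n ω i| ≤ C)
    (hY0 : ∀ n i, μ[fun ω => Y n ω i | Fprev F n] =ᵐ[μ] fun _ => 0)
    (hY2 : ∀ n i j, μ[fun ω => Y n ω i * Y n ω j | Fprev F n] =ᵐ[μ]
      fun _ => if i = j then (1 : ℝ) else 0)
    (r : ℕ) (hr : 1 ≤ r)
    (f : (Fin r → ℕ) → (Fin r → Fin d) → ℝ)
    (hfsymm : ∀ (σ : Equiv.Perm (Fin r)) i k, f (i ∘ σ) (k ∘ σ) = f i k)
    (hfΔ : ∀ i k, ¬Function.Injective i → f i k = 0)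
    (hfsupp : ∃ N, ∀ i k, (∃ t, N ≤ i t) → f i k = 0)
    (N : ℕ) :
    AEStronglyMeasurable[F N] (multInt d r Y f) μ ↔
      ∀ i k, f i k ≠ 0 → ∀ t, i t ≤ N := by
  classical
  constructor
  · -- forward direction
    rintro ⟨g, hg, hfg⟩ i₀ k₀ hf0
    by_contra hcon
    push_neg at hcon
    obtain ⟨t₀, ht₀⟩ := hcon
    haveI : Nonempty (Fin r) := ⟨⟨0, hr⟩⟩
    haveI : Nonempty (Fin d) := ⟨k₀ t₀⟩
    have hinj : Function.Injective i₀ := by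
      by_contra h; exact hf0 (hfΔ i₀ k₀ h)
    obtain ⟨N₀, hN₀⟩ := hfsupp
    obtain ⟨ts, -, hts⟩ := Finset.exists_max_image Finset.univ i₀ ⟨t₀, Finset.mem_univ t₀⟩
    have hNM : N < i₀ ts := lt_of_lt_of_le ht₀ (hts t₀ (Finset.mem_univ t₀))
    have hkey : ∫ ω, multInt d r Y f ω * ∏ t, Y (i₀ t) ω (k₀ t) ∂μ
        = (r.factorial : ℝ) * f i₀ k₀ :=
      Stmt5Aux.pairing hFle hFmono hYadp hYbd hY0 hY2 hfsymm hN₀ i₀ hinj k₀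
    have hzero : ∫ ω, multInt d r Y f ω * ∏ t, Y (i₀ t) ω (k₀ t) ∂μ = 0 := by
      have hBMY := Stmt5Aux.BM_Y (μ := μ) hFle hYbd hYadp
      have hBMrest : Stmt5Aux.BM μ (fun ω => ∏ t ∈ Finset.univ.erase ts, Y (i₀ t) ω (k₀ t)) :=
        Stmt5Aux.BM_prod fun t _ => hBMY (i₀ t) (k₀ t)
      have hBMI : Stmt5Aux.BM μ (multInt d r Y f) :=
        Stmt5Aux.BM_multInt hFle hYadp hYbd hN₀
      set X : Ω → ℝ := fun ω => g ω * ∏ t ∈ Finset.univ.erase ts, Y (i₀ t) ω (k₀ t) with hX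
      have hsplit : ∀ ω, (∏ t, Y (i₀ t) ω (k₀ t))
          = Y (i₀ ts) ω (k₀ ts) * ∏ t ∈ Finset.univ.erase ts, Y (i₀ t) ω (k₀ t) :=
        fun ω => (Finset.mul_prod_erase Finset.univ _ (Finset.mem_univ ts)).symm
      obtain ⟨M', hM'⟩ : ∃ M', i₀ ts = M' + 1 := ⟨i₀ ts - 1, by omega⟩
      have hle : F N ≤ Fprev F (i₀ ts) := by
        rw [hM']; exact hFmono (by omega)
      have hfac : ∀ t ∈ Finset.univ.erase ts, F (i₀ t) ≤ Fprev F (i₀ ts) := by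
        intro t ht
        have h1 : i₀ t ≤ i₀ ts := hts t (Finset.mem_univ t)
        have h2 : i₀ t ≠ i₀ ts := fun h => (Finset.ne_of_mem_erase ht) (hinj h)
        rw [hM']
        exact hFmono (by omega)
      have hXsm : StronglyMeasurable[Fprev F (i₀ ts)] X := by
        apply StronglyMeasurable.mul (hg.mono hle)
        apply Measurable.stronglyMeasurable
        exact Finset.measurable_prod _ fun t ht => (hYadp (i₀ t) (k₀ t)).mono (hfac t ht) le_rfl
      have hXi : Integrable X μ := by
        apply (hBMI.mul hBMrest).integrable.congr
        filter_upwards [hfg] with ω hω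
        simp only [hX, hω]
      have hXYi : Integrable (fun ω => X ω * Y (i₀ ts) ω (k₀ ts)) μ := by
        apply ((hBMI.mul hBMrest).mul (hBMY (i₀ ts) (k₀ ts))).integrable.congr
        filter_upwards [hfg] with ω hω
        simp only [hX, hω]
      have h0 := Stmt5Aux.zero_int hFle hY0 (i₀ ts) (k₀ ts) X hXsm hXi
        (hBMY (i₀ ts) (k₀ ts)).integrable hXYi
      calc ∫ ω, multInt d r Y f ω * ∏ t, Y (i₀ t) ω (k₀ t) ∂μ
          = ∫ ω, X ω * Y (i₀ ts) ω (k₀ ts) ∂μ := by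
            apply integral_congr_ae
            filter_upwards [hfg] with ω hω
            rw [hsplit ω, hω, hX]; ring
        _ = 0 := h0
    rw [hkey] at hzero
    rcases mul_eq_zero.mp hzero with h | h
    · exact absurd h (Nat.cast_ne_zero.mpr r.factorial_ne_zero)
    · exact hf0 h
  · -- backward direction
    intro h
    refine ⟨multInt d r Y f, ?_, Filter.EventuallyEq.rfl⟩
    have hsupp : ∀ i k, (∃ t, N + 1 ≤ i t) → f i k = 0 := by
      rintro i k ⟨t, ht⟩
      by_contra hne
      have := h i k hne t
      omega
    have heq : multInt d r Y f = fun ω =>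
        ∑ i ∈ Fintype.piFinset (fun _ : Fin r => Finset.range (N + 1)),
          ∑ k : Fin r → Fin d,
            (if Function.Injective i then f i k * ∏ t, Y (i t) ω (k t) else 0) :=
      funext fun ω => Stmt5Aux.multInt_eq hsupp ω
    rw [heq]
    apply Measurable.stronglyMeasurable
    apply Finset.measurable_sum
    intro i hi
    apply Finset.measurable_sum
    intro k _
    by_cases hinj : Function.Injective i
    · simp only [if_pos hinj]
      apply Measurable.const_mul
      apply Finset.measurable_prod
      intro t _
      have hit : i t ≤ N := by
        have := Fintype.mem_piFinset.mp hi t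
        rw [Finset.mem_range] at this
        omega
      exact (hYadp (i t) (k t)).mono (hFmono hit) le_rfl
    · simp only [if_neg hinj]
      exact measurable_const

end
end

section
/- Let (Y_n) be a normal martingale increment sequence in R^d whose filtration (F_n) has multiplicity d+1 (each atom of F_n splits into d+1 atoms of F_{n+1} of positive probability). Then for each n, L⁰(Ω, F_n) has dimension (d+1)^{n+1}, and the family { Y_{i_1}^{k_1} ··· Y_{i_r}^{k_r} : 0 ≤ i_1 < ... < i_r ≤ n, 1 ≤ k_1,...,k_r ≤ d, 0 ≤ r ≤ n+1 } forms an orthonormal basis of L²(Ω, F_n). Consequently L⁰(Ω, F_n) ⊂ H_0 ⊕ ... ⊕ H_{n+1}, where H_r is the r-th chaos. -/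
open MeasureTheory Finset ProbabilityTheory Matrix

noncomputable section

/-- The σ-algebra generated by the first `n+1` coordinates of the canonical space
`Ω = {0,…,d}^ℕ`. -/
def coordFilt (d n : ℕ) : MeasurableSpace (ℕ → Fin (d + 1)) :=
  MeasurableSpace.comap (fun ω (k : Fin (n + 1)) => ω k) inferInstance

/-- The product `Y_{i_1}^{k_1} ⋯ Y_{i_r}^{k_r}` attached to the index
`P = (r, (i_1,…,i_r), (k_1,…,k_r))`, where `Y_n(ω) = v_n(ω_n)`. -/
def basisProd (d n : ℕ) (v : ℕ → Fin (d + 1) → Fin d → ℝ)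
    (P : Σ r : Fin (n + 2), (Fin (r : ℕ) → Fin (n + 1)) × (Fin (r : ℕ) → Fin d))
    (ω : ℕ → Fin (d + 1)) : ℝ :=
  ∏ u, v (P.2.1 u) (ω (P.2.1 u)) (P.2.2 u)



namespace Stmt6Aux

variable {d n : ℕ}

abbrev Idx (d n : ℕ) := Σ r : Fin (n + 2), (Fin (r : ℕ) → Fin (n + 1)) × (Fin (r : ℕ) → Fin d)

/-- one-coordinate basis functions: `E k 0 = 1`, `E k (j+1) a = v k a j`. -/
def Efun (v : ℕ → Fin (d + 1) → Fin d → ℝ) (k : ℕ) (c a : Fin (d + 1)) : ℝ :=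
  Fin.cases 1 (fun j => v k a j) c

@[simp] lemma Efun_zero (v : ℕ → Fin (d + 1) → Fin d → ℝ) (k : ℕ) (a : Fin (d + 1)) :
    Efun v k 0 a = 1 := rfl

@[simp] lemma Efun_succ (v : ℕ → Fin (d + 1) → Fin d → ℝ) (k : ℕ) (j : Fin d) (a : Fin (d + 1)) :
    Efun v k j.succ a = v k a j := by
  simp [Efun]

/-- tensor-product functions on the finite cube. -/
def Tfun (v : ℕ → Fin (d + 1) → Fin d → ℝ) (f x : Fin (n + 1) → Fin (d + 1)) : ℝ :=
  ∏ k : Fin (n + 1), Efun v k.val (f k) (x k)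

section coordinate

variable (p : ℕ → Fin (d + 1) → ℝ) (v : ℕ → Fin (d + 1) → Fin d → ℝ)

lemma inner_E (k : ℕ) (hsum : ∑ a, p k a = 1)
    (hv0 : ∀ j, ∑ a, p k a * v k a j = 0)
    (hv2 : ∀ j l, ∑ a, p k a * v k a j * v k a l = if j = l then (1 : ℝ) else 0)
    (c c' : Fin (d + 1)) :
    ∑ a, p k a * (Efun v k c a * Efun v k c' a) = if c = c' then 1 else 0 := by
  induction c using Fin.cases with
  | zero =>
    induction c' using Fin.cases with
    | zero => simpa using hsum
    | succ j => simpa [(Fin.succ_ne_zero j).symm] using hv0 j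
  | succ j =>
    induction c' using Fin.cases with
    | zero => simpa [Fin.succ_ne_zero j] using hv0 j
    | succ l =>
      have := hv2 j l
      simp only [Efun_succ, Fin.succ_inj]
      rw [← this]
      exact Finset.sum_congr rfl fun a _ => by ring

lemma dual_E (k : ℕ) (hp : ∀ a, 0 < p k a) (hsum : ∑ a, p k a = 1)
    (hv0 : ∀ j, ∑ a, p k a * v k a j = 0)
    (hv2 : ∀ j l, ∑ a, p k a * v k a j * v k a l = if j = l then (1 : ℝ) else 0)
    (a b : Fin (d + 1)) :
    ∑ c, Efun v k c a * Efun v k c b = if a = b then (p k a)⁻¹ else 0 := by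
  classical
  set M : Matrix (Fin (d + 1)) (Fin (d + 1)) ℝ :=
    Matrix.of (fun c a => Real.sqrt (p k a) * Efun v k c a) with hM
  have hMMt : M * Mᵀ = 1 := by
    ext c c'
    have : ∑ a, (Real.sqrt (p k a) * Efun v k c a) * (Real.sqrt (p k a) * Efun v k c' a)
        = ∑ a, p k a * (Efun v k c a * Efun v k c' a) := by
      refine Finset.sum_congr rfl fun a _ => ?_
      rw [mul_mul_mul_comm, Real.mul_self_sqrt (hp a).le]
    simp only [Matrix.mul_apply, Matrix.transpose_apply, Matrix.one_apply, hM, Matrix.of_apply]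
    rw [this, inner_E p v k hsum hv0 hv2]
  have hMtM : Mᵀ * M = 1 := mul_eq_one_comm.mp hMMt
  have h := congrFun (congrFun (congrArg (fun A => (A : Matrix _ _ ℝ)) hMtM) a) b
  simp only [Matrix.mul_apply, Matrix.transpose_apply, Matrix.one_apply, hM,
    Matrix.of_apply] at h
  have h' : Real.sqrt (p k a) * Real.sqrt (p k b) * (∑ c, Efun v k c a * Efun v k c b)
      = if a = b then 1 else 0 := by
    rw [Finset.mul_sum]
    rw [← h]
    exact Finset.sum_congr rfl fun c _ => by ring
  by_cases hab : a = b
  · subst hab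
    rw [if_pos rfl] at h' ⊢
    have hpa : Real.sqrt (p k a) * Real.sqrt (p k a) = p k a := Real.mul_self_sqrt (hp a).le
    rw [hpa] at h'
    exact eq_inv_of_mul_eq_one_left (by linarith [h'])
  · rw [if_neg hab] at h' ⊢
    have h1 : Real.sqrt (p k a) ≠ 0 := ne_of_gt (Real.sqrt_pos.mpr (hp a))
    have h2 : Real.sqrt (p k b) ≠ 0 := ne_of_gt (Real.sqrt_pos.mpr (hp b))
    have := mul_ne_zero h1 h2
    rcases mul_eq_zero.mp h' with h | h
    · exact absurd h this
    · exact h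

end coordinate

section tensor

variable (p : ℕ → Fin (d + 1) → ℝ) (v : ℕ → Fin (d + 1) → Fin d → ℝ)
variable (hp : ∀ k a, 0 < p k a) (hsum : ∀ k, ∑ a, p k a = 1)
  (hv0 : ∀ k j, ∑ a, p k a * v k a j = 0)
  (hv2 : ∀ k j l, ∑ a, p k a * v k a j * v k a l = if j = l then (1 : ℝ) else 0)

/-- weight of a point of the cube -/
def wfun (x : Fin (n + 1) → Fin (d + 1)) : ℝ := ∏ k : Fin (n + 1), p k.val (x k)

include hp in
lemma wfun_pos (x : Fin (n + 1) → Fin (d + 1)) : 0 < wfun p x :=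
  Finset.prod_pos fun k _ => hp k (x k)

include hsum hv0 hv2 in
lemma inner_T (f g : Fin (n + 1) → Fin (d + 1)) :
    ∑ x : Fin (n + 1) → Fin (d + 1), wfun p x * (Tfun v f x * Tfun v g x)
      = if f = g then 1 else 0 := by
  classical
  have step1 : ∀ x : Fin (n + 1) → Fin (d + 1),
      wfun p x * (Tfun v f x * Tfun v g x)
        = ∏ k : Fin (n + 1), (p k.val (x k) * (Efun v k.val (f k) (x k) * Efun v k.val (g k) (x k))) := by
    intro x
    rw [wfun, Tfun, Tfun, ← Finset.prod_mul_distrib, ← Finset.prod_mul_distrib]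
  calc ∑ x : Fin (n + 1) → Fin (d + 1), wfun p x * (Tfun v f x * Tfun v g x)
      = ∑ x : Fin (n + 1) → Fin (d + 1), ∏ k : Fin (n + 1),
          (p k.val (x k) * (Efun v k.val (f k) (x k) * Efun v k.val (g k) (x k))) :=
        Finset.sum_congr rfl fun x _ => step1 x
    _ = ∏ k : Fin (n + 1), ∑ a : Fin (d + 1),
          (p k.val a * (Efun v k.val (f k) a * Efun v k.val (g k) a)) :=
        (Fintype.prod_sum (fun (k : Fin (n + 1)) (a : Fin (d + 1)) => (p k.val a * (Efun v k.val (f k) a * Efun v k.val (g k) a)))).symm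
    _ = ∏ k : Fin (n + 1), if f k = g k then (1 : ℝ) else 0 :=
        Finset.prod_congr rfl fun k _ => inner_E p v k.val (hsum k.val) (hv0 k.val) (hv2 k.val) _ _
    _ = if f = g then 1 else 0 := by rw [Fintype.prod_boole]; simp [funext_iff]

include hp hsum hv0 hv2 in
lemma dual_T (x y : Fin (n + 1) → Fin (d + 1)) :
    ∑ f : Fin (n + 1) → Fin (d + 1), Tfun v f x * Tfun v f y
      = if x = y then (wfun p x)⁻¹ else 0 := by
  classical
  calc ∑ f : Fin (n + 1) → Fin (d + 1), Tfun v f x * Tfun v f y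
      = ∑ f : Fin (n + 1) → Fin (d + 1), ∏ k : Fin (n + 1),
          (Efun v k.val (f k) (x k) * Efun v k.val (f k) (y k)) :=
        Finset.sum_congr rfl fun f _ => by
          rw [Tfun, Tfun, ← Finset.prod_mul_distrib]
    _ = ∏ k : Fin (n + 1), ∑ c : Fin (d + 1), Efun v k.val c (x k) * Efun v k.val c (y k) :=
        (Fintype.prod_sum (fun (k : Fin (n + 1)) (c : Fin (d + 1)) => Efun v k.val c (x k) * Efun v k.val c (y k))).symm
    _ = ∏ k : Fin (n + 1), (if x k = y k then (p k.val (x k))⁻¹ else 0) :=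
        Finset.prod_congr rfl fun k _ =>
          dual_E p v k.val (hp k.val) (hsum k.val) (hv0 k.val) (hv2 k.val) _ _
    _ = if x = y then (wfun p x)⁻¹ else 0 := by
        by_cases hxy : x = y
        · subst hxy
          rw [if_pos rfl, wfun, ← Finset.prod_inv_distrib]
          exact Finset.prod_congr rfl fun k _ => if_pos rfl
        · rw [if_neg hxy]
          obtain ⟨k, hk⟩ : ∃ k, x k ≠ y k := by
            by_contra hcon
            push_neg at hcon
            exact hxy (funext hcon)
          exact Finset.prod_eq_zero (Finset.mem_univ k) (if_neg hk)

include hp hsum hv0 hv2 in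
lemma complete_T (F : (Fin (n + 1) → Fin (d + 1)) → ℝ) (x : Fin (n + 1) → Fin (d + 1)) :
    F x = ∑ f : Fin (n + 1) → Fin (d + 1),
      (∑ y : Fin (n + 1) → Fin (d + 1), wfun p y * (F y * Tfun v f y)) * Tfun v f x := by
  classical
  have swap : ∑ f : Fin (n + 1) → Fin (d + 1),
      (∑ y : Fin (n + 1) → Fin (d + 1), wfun p y * (F y * Tfun v f y)) * Tfun v f x
      = ∑ y : Fin (n + 1) → Fin (d + 1), (wfun p y * F y) *
          ∑ f : Fin (n + 1) → Fin (d + 1), Tfun v f y * Tfun v f x := by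
    simp only [Finset.sum_mul, Finset.mul_sum]
    rw [Finset.sum_comm]
    exact Finset.sum_congr rfl fun y _ => Finset.sum_congr rfl fun f _ => by ring
  rw [swap]
  have : ∀ y : Fin (n + 1) → Fin (d + 1), (wfun p y * F y) *
      (∑ f : Fin (n + 1) → Fin (d + 1), Tfun v f y * Tfun v f x)
      = if y = x then F x else 0 := by
    intro y
    rw [dual_T p v hp hsum hv0 hv2 y x]
    by_cases hyx : y = x
    · subst hyx
      rw [if_pos rfl, if_pos rfl]
      have hw := (wfun_pos p hp y).ne'
      field_simp
    · rw [if_neg hyx, if_neg hyx, mul_zero]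
  rw [Finset.sum_congr rfl fun y _ => this y]
  simp

end tensor

section encoding

open Classical in
/-- encode a strictly monotone index `P` as a function on coordinates. -/
def fwdFun (P : Idx d n) : Fin (n + 1) → Fin (d + 1) := fun k =>
  if h : ∃ u, P.2.1 u = k then (P.2.2 h.choose).succ else 0

lemma fwdFun_eq {P : Idx d n} (hP : StrictMono P.2.1) (u : Fin (P.1 : ℕ)) :
    fwdFun P (P.2.1 u) = (P.2.2 u).succ := by
  have h : ∃ u', P.2.1 u' = P.2.1 u := ⟨u, rfl⟩
  rw [fwdFun, dif_pos h]
  exact congrArg (fun z => (P.2.2 z).succ) (hP.injective h.choose_spec)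

lemma fwdFun_ne {P : Idx d n} {k : Fin (n + 1)} (h : ¬ ∃ u, P.2.1 u = k) :
    fwdFun P k = 0 := dif_neg h

lemma fwdFun_ne_zero_iff {P : Idx d n} (hP : StrictMono P.2.1) (k : Fin (n + 1)) :
    fwdFun P k ≠ 0 ↔ ∃ u, P.2.1 u = k := by
  constructor
  · intro h
    by_contra hcon
    exact h (fwdFun_ne hcon)
  · rintro ⟨u, rfl⟩
    rw [fwdFun_eq hP u]
    exact Fin.succ_ne_zero _

lemma fwd_inj {P Q : Idx d n} (hP : StrictMono P.2.1) (hQ : StrictMono Q.2.1)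
    (h : fwdFun P = fwdFun Q) : P = Q := by
  obtain ⟨⟨rP, hrP⟩, ιP, κP⟩ := P
  obtain ⟨⟨rQ, hrQ⟩, ιQ, κQ⟩ := Q
  have hrange : ∀ k, (∃ u, ιP u = k) ↔ (∃ u, ιQ u = k) := fun k => by
    rw [← fwdFun_ne_zero_iff hP k, ← fwdFun_ne_zero_iff hQ k, h]
  have himg : Finset.image ιP Finset.univ = Finset.image ιQ Finset.univ := by
    ext k
    simpa [Finset.mem_image] using hrange k
  have hcard : rP = rQ := by
    have hc := congrArg Finset.card himg
    rwa [Finset.card_image_of_injective _ hP.injective,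
      Finset.card_image_of_injective _ hQ.injective, Finset.card_univ, Finset.card_univ,
      Fintype.card_fin, Fintype.card_fin] at hc
  subst hcard
  have hι : ιP = ιQ := by
    have hcards : (Finset.image ιP Finset.univ).card = rP := by
      rw [Finset.card_image_of_injective _ hP.injective, Finset.card_univ, Fintype.card_fin]
    have h1 : ιP = (Finset.image ιP Finset.univ).orderEmbOfFin hcards :=
      Finset.orderEmbOfFin_unique hcards
        (fun u => Finset.mem_image_of_mem _ (Finset.mem_univ u)) hP
    have h2 : ιQ = (Finset.image ιP Finset.univ).orderEmbOfFin hcards :=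
      Finset.orderEmbOfFin_unique hcards
        (fun u => himg ▸ Finset.mem_image_of_mem _ (Finset.mem_univ u)) hQ
    rw [h1, h2]
  subst hι
  have hκ : κP = κQ := by
    funext u
    have h1 := congrFun h (ιP u)
    rw [fwdFun_eq hP u, fwdFun_eq hQ u] at h1
    exact Fin.succ_injective _ h1
  rw [hκ]

lemma fwd_surj (f : Fin (n + 1) → Fin (d + 1)) :
    ∃ P : Idx d n, ∃ hP : StrictMono P.2.1, fwdFun P = f := by
  classical
  set s : Finset (Fin (n + 1)) := Finset.univ.filter (fun k => f k ≠ 0) with hs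
  have hslt : s.card < n + 2 := by
    have h1 : s.card ≤ (Finset.univ : Finset (Fin (n + 1))).card := Finset.card_filter_le _ _
    simp only [Finset.card_univ, Fintype.card_fin] at h1
    omega
  have hmem : ∀ u : Fin s.card, f (s.orderEmbOfFin rfl u) ≠ 0 := fun u => by
    have h2 : (s.orderEmbOfFin rfl) u ∈ Finset.univ.filter (fun k => f k ≠ 0) :=
      Finset.orderEmbOfFin_mem s rfl u
    exact (Finset.mem_filter.mp h2).2
  refine ⟨⟨⟨s.card, hslt⟩, fun u => s.orderEmbOfFin rfl u,
    fun u => (f (s.orderEmbOfFin rfl u)).pred (hmem u)⟩, (s.orderEmbOfFin rfl).strictMono, ?_⟩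
  funext k
  by_cases hk : f k = 0
  · have hnex : ¬ ∃ u : Fin s.card, s.orderEmbOfFin rfl u = k := by
      rintro ⟨u, hu⟩
      exact hmem u (hu ▸ hk)
    rw [hk]
    exact fwdFun_ne hnex
  · have hks : k ∈ s := by rw [hs, Finset.mem_filter]; exact ⟨Finset.mem_univ k, hk⟩
    have hex : ∃ u : Fin s.card, s.orderEmbOfFin rfl u = k := by
      have := Finset.range_orderEmbOfFin s (rfl : s.card = s.card)
      have hk2 : k ∈ Set.range (s.orderEmbOfFin rfl) := by rw [this]; exact hks
      exact hk2
    rw [fwdFun, dif_pos hex]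
    have hspec := hex.choose_spec
    rw [Fin.succ_pred]
    exact congrArg f hspec

/-- the encoding equivalence. -/
def basisEquiv (d n : ℕ) : {P : Idx d n // StrictMono P.2.1} ≃ (Fin (n + 1) → Fin (d + 1)) :=
  Equiv.ofBijective (fun q => fwdFun q.1)
    ⟨fun q q' h => Subtype.ext (fwd_inj q.2 q'.2 h),
     fun f => by obtain ⟨P, hP, hf⟩ := fwd_surj f; exact ⟨⟨P, hP⟩, hf⟩⟩

@[simp] lemma basisEquiv_apply (q : {P : Idx d n // StrictMono P.2.1}) :
    basisEquiv d n q = fwdFun q.1 := rfl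

lemma card_strictMono :
    Fintype.card {P : Idx d n // StrictMono P.2.1} = (d + 1) ^ (n + 1) := by
  rw [Fintype.card_congr (basisEquiv d n), Fintype.card_fun, Fintype.card_fin, Fintype.card_fin]

lemma basisProd_eq_T (v : ℕ → Fin (d + 1) → Fin d → ℝ) {P : Idx d n}
    (hP : StrictMono P.2.1) (ω : ℕ → Fin (d + 1)) :
    basisProd d n v P ω = Tfun v (fwdFun P) (fun k => ω k.val) := by
  classical
  rw [Tfun, basisProd]
  have h1 : ∏ k : Fin (n + 1), Efun v k.val (fwdFun P k) (ω k.val)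
      = ∏ k ∈ Finset.image P.2.1 Finset.univ, Efun v k.val (fwdFun P k) (ω k.val) := by
    refine (Finset.prod_subset (Finset.subset_univ _) ?_).symm
    intro k _ hk
    have hnex : ¬ ∃ u, P.2.1 u = k := by
      rintro ⟨u, hu⟩
      exact hk (hu ▸ Finset.mem_image_of_mem _ (Finset.mem_univ u))
    rw [fwdFun_ne hnex, Efun_zero]
  rw [h1, Finset.prod_image (fun u _ u' _ huu => hP.injective huu)]
  refine Finset.prod_congr rfl fun u _ => ?_
  rw [fwdFun_eq hP u, Efun_succ]

end encoding

lemma sum_ite_subtype (g : Idx d n → ℝ) :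
    ∑ P : Idx d n, (if StrictMono P.2.1 then g P else 0)
      = ∑ q : {P : Idx d n // StrictMono P.2.1}, g q.1 := by
  classical
  rw [← Finset.sum_filter]
  exact Finset.sum_subtype _ (fun x => by simp only [Finset.mem_filter, Finset.mem_univ, true_and]) g

lemma sum_conv (v : ℕ → Fin (d + 1) → Fin d → ℝ) (coef : Idx d n → ℝ) (ω : ℕ → Fin (d + 1)) :
    ∑ P : Idx d n, coef P * (if StrictMono P.2.1 then basisProd d n v P ω else 0)
      = ∑ f : Fin (n + 1) → Fin (d + 1),
          coef ((basisEquiv d n).symm f).1 * Tfun v f (fun k => ω k.val) := by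
  classical
  have h1 : ∀ P : Idx d n, coef P * (if StrictMono P.2.1 then basisProd d n v P ω else 0)
      = if StrictMono P.2.1 then coef P * basisProd d n v P ω else 0 := fun P => by
    split <;> simp
  rw [Finset.sum_congr rfl fun P _ => h1 P, sum_ite_subtype]
  rw [← Equiv.sum_comp (basisEquiv d n)
    (fun f => coef ((basisEquiv d n).symm f).1 * Tfun v f (fun k => ω k.val))]
  refine Finset.sum_congr rfl fun q _ => ?_
  rw [Equiv.symm_apply_apply, basisEquiv_apply, ← basisProd_eq_T v q.2 ω]

end Stmt6Aux


/-- for an obtuse random walk (canonical model, multiplicity `d+1`),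
the family `{Y_{i_1}^{k_1}⋯Y_{i_r}^{k_r} : 0 ≤ i_1 < … < i_r ≤ n, r ≤ n+1}` is an
orthonormal basis of `L²(Ω, F_n)`: it is orthonormal, has `(d+1)^{n+1}` members
(the dimension of `L⁰(Ω,F_n)`), spans every `F_n`-measurable functional
(hence `L⁰(Ω,F_n) ⊂ H_0 ⊕ … ⊕ H_{n+1}`), and is linearly independent. -/
theorem stmt_6 (d : ℕ) (μ : Measure (ℕ → Fin (d + 1))) [IsProbabilityMeasure μ]
    (p : ℕ → Fin (d + 1) → ℝ) (v : ℕ → Fin (d + 1) → Fin d → ℝ)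
    (hp : ∀ k a, 0 < p k a)
    (hmarg : ∀ k a, μ {ω | ω k = a} = ENNReal.ofReal (p k a))
    (hindep : iIndepFun (fun k (ω : ℕ → Fin (d + 1)) => ω k) μ)
    (hv0 : ∀ k j, ∑ a, p k a * v k a j = 0)
    (hv2 : ∀ k j l, ∑ a, p k a * v k a j * v k a l = if j = l then (1 : ℝ) else 0)
    (n : ℕ) :
    (∀ P Q : Σ r : Fin (n + 2), (Fin (r : ℕ) → Fin (n + 1)) × (Fin (r : ℕ) → Fin d),
        StrictMono P.2.1 → StrictMono Q.2.1 →
        ∫ ω, basisProd d n v P ω * basisProd d n v Q ω ∂μ = if P = Q then 1 else 0) ∧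
      (Fintype.card
          {P : Σ r : Fin (n + 2), (Fin (r : ℕ) → Fin (n + 1)) × (Fin (r : ℕ) → Fin d) //
            StrictMono P.2.1} = (d + 1) ^ (n + 1)) ∧
      (∀ G : (ℕ → Fin (d + 1)) → ℝ, Measurable[coordFilt d n] G →
        ∃ coef : (Σ r : Fin (n + 2), (Fin (r : ℕ) → Fin (n + 1)) × (Fin (r : ℕ) → Fin d)) → ℝ,
          ∀ ω, G ω = ∑ P, coef P * (if StrictMono P.2.1 then basisProd d n v P ω else 0)) ∧
      (∀ coef : (Σ r : Fin (n + 2), (Fin (r : ℕ) → Fin (n + 1)) × (Fin (r : ℕ) → Fin d)) → ℝ,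
        (∀ ω, ∑ P, coef P * (if StrictMono P.2.1 then basisProd d n v P ω else 0) = 0) →
        ∀ P, StrictMono P.2.1 → coef P = 0) := by
  classical
  set π : (ℕ → Fin (d + 1)) → (Fin (n + 1) → Fin (d + 1)) := fun ω k => ω k.val with hπ
  set ext : (Fin (n + 1) → Fin (d + 1)) → (ℕ → Fin (d + 1)) :=
    fun x m => if h : m < n + 1 then x ⟨m, h⟩ else 0 with hext
  have hπext : ∀ x, π (ext x) = x := by
    intro x
    funext k
    simp only [hπ, hext]
    rw [dif_pos k.isLt]
  have hsum : ∀ k : ℕ, ∑ a, p k a = 1 := by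
    intro k
    have hms : ∀ a : Fin (d + 1), MeasurableSet {ω : ℕ → Fin (d + 1) | ω k = a} := by
      intro a
      have : {ω : ℕ → Fin (d + 1) | ω k = a} = (fun ω : ℕ → Fin (d + 1) => ω k) ⁻¹' {a} := rfl
      rw [this]
      exact (measurable_pi_apply k) (measurableSet_singleton a)
    have hdisj : Pairwise (Function.onFun Disjoint
        fun a : Fin (d + 1) => {ω : ℕ → Fin (d + 1) | ω k = a}) := by
      intro a b hab
      simp only [Function.onFun, Set.disjoint_left]
      intro ω h1 h2
      exact hab (by rw [← h1, h2])
    have huniv : (⋃ a : Fin (d + 1), {ω : ℕ → Fin (d + 1) | ω k = a}) = Set.univ := by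
      ext ω; simp
    have h1 : (∑ a : Fin (d + 1), μ {ω | ω k = a}) = 1 := by
      rw [← tsum_fintype (L := SummationFilter.unconditional _), ← measure_iUnion hdisj hms, huniv, measure_univ]
    rw [Finset.sum_congr rfl (fun a _ => hmarg k a),
      ← ENNReal.ofReal_sum_of_nonneg (fun a _ => (hp k a).le)] at h1
    have h2 := congrArg ENNReal.toReal h1
    rwa [ENNReal.toReal_ofReal (Finset.sum_nonneg fun a _ => (hp k a).le),
      ENNReal.toReal_one] at h2
  have hπmeas : ∀ x, MeasurableSet (π ⁻¹' {x}) := by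
    intro x
    have hset : π ⁻¹' {x}
        = ⋂ k : Fin (n + 1), (fun ω : ℕ → Fin (d + 1) => ω k.val) ⁻¹' {x k} := by
      ext ω
      simp [hπ, funext_iff]
    rw [hset]
    exact MeasurableSet.iInter fun k =>
      (measurable_pi_apply k.val) (measurableSet_singleton (x k))
  have hw : ∀ x, μ (π ⁻¹' {x}) = ENNReal.ofReal (Stmt6Aux.wfun p x) := by
    intro x
    set g : ℕ → ENNReal := fun m => if h : m < n + 1 then ENNReal.ofReal (p m (x ⟨m, h⟩)) else 1
      with hg
    set sets : ℕ → Set (Fin (d + 1)) := fun m => if h : m < n + 1 then {x ⟨m, h⟩} else Set.univ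
      with hsets
    have hseteq : π ⁻¹' {x}
        = ⋂ m ∈ Finset.range (n + 1), (fun ω : ℕ → Fin (d + 1) => ω m) ⁻¹' sets m := by
      ext ω
      simp only [Set.mem_preimage, Set.mem_singleton_iff, funext_iff, Set.mem_iInter,
        Finset.mem_range, hπ, hsets]
      constructor
      · intro hωx m hm
        rw [dif_pos hm]
        exact hωx ⟨m, hm⟩
      · intro hs k
        have h2 := hs k.val k.isLt
        rw [dif_pos k.isLt] at h2
        exact h2
    have hmeas : ∀ m ∈ Finset.range (n + 1), MeasurableSet (sets m) := by
      intro m _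
      simp only [hsets]
      split
      · exact measurableSet_singleton _
      · exact MeasurableSet.univ
    rw [hseteq, hindep.measure_inter_preimage_eq_mul (Finset.range (n + 1)) hmeas]
    have hterm : ∀ m ∈ Finset.range (n + 1),
        μ ((fun ω : ℕ → Fin (d + 1) => ω m) ⁻¹' sets m) = g m := by
      intro m hm
      rw [Finset.mem_range] at hm
      simp only [hsets, hg]
      rw [dif_pos hm, dif_pos hm, ← hmarg m (x ⟨m, hm⟩)]
      rfl
    rw [Finset.prod_congr rfl hterm, ← Fin.prod_univ_eq_prod_range g (n + 1),
      Stmt6Aux.wfun, ENNReal.ofReal_prod_of_nonneg (fun k _ => (hp k.val (x k)).le)]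
    refine Finset.prod_congr rfl fun k _ => ?_
    simp only [hg]
    rw [dif_pos k.isLt]
  have key : ∀ F : (Fin (n + 1) → Fin (d + 1)) → ℝ,
      ∫ ω, F (π ω) ∂μ = ∑ x, Stmt6Aux.wfun p x * F x := by
    intro F
    have hpt : ∀ ω, F (π ω)
        = ∑ x : Fin (n + 1) → Fin (d + 1), Set.indicator (π ⁻¹' {x}) (fun _ => F x) ω := by
      intro ω
      simp only [Set.indicator_apply, Set.mem_preimage, Set.mem_singleton_iff]
      rw [Finset.sum_ite_eq]
      simp
    calc ∫ ω, F (π ω) ∂μ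
        = ∫ ω, ∑ x : Fin (n + 1) → Fin (d + 1),
            Set.indicator (π ⁻¹' {x}) (fun _ => F x) ω ∂μ :=
          integral_congr_ae (Filter.Eventually.of_forall hpt)
      _ = ∑ x : Fin (n + 1) → Fin (d + 1),
            ∫ ω, Set.indicator (π ⁻¹' {x}) (fun _ => F x) ω ∂μ :=
          integral_finset_sum _ (fun x _ => (integrable_const (F x)).indicator (hπmeas x))
      _ = ∑ x, Stmt6Aux.wfun p x * F x := by
          refine Finset.sum_congr rfl fun x _ => ?_
          rw [integral_indicator_const (F x) (hπmeas x), Measure.real, hw x,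
            ENNReal.toReal_ofReal (Stmt6Aux.wfun_pos p hp x).le, smul_eq_mul]
  refine ⟨?_, Stmt6Aux.card_strictMono, ?_, ?_⟩
  · -- orthonormality
    intro P Q hP hQ
    calc ∫ ω, basisProd d n v P ω * basisProd d n v Q ω ∂μ
        = ∫ ω, Stmt6Aux.Tfun v (Stmt6Aux.fwdFun P) (π ω)
            * Stmt6Aux.Tfun v (Stmt6Aux.fwdFun Q) (π ω) ∂μ := by
          refine integral_congr_ae (Filter.Eventually.of_forall fun ω => ?_)
          dsimp only
          rw [Stmt6Aux.basisProd_eq_T v hP ω, Stmt6Aux.basisProd_eq_T v hQ ω]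
      _ = ∑ x, Stmt6Aux.wfun p x * (Stmt6Aux.Tfun v (Stmt6Aux.fwdFun P) x
            * Stmt6Aux.Tfun v (Stmt6Aux.fwdFun Q) x) :=
          key (fun x => Stmt6Aux.Tfun v (Stmt6Aux.fwdFun P) x
            * Stmt6Aux.Tfun v (Stmt6Aux.fwdFun Q) x)
      _ = if Stmt6Aux.fwdFun P = Stmt6Aux.fwdFun Q then 1 else 0 :=
          Stmt6Aux.inner_T p v hsum hv0 hv2 _ _
      _ = if P = Q then 1 else 0 := by
          have hiff : Stmt6Aux.fwdFun P = Stmt6Aux.fwdFun Q ↔ P = Q :=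
            ⟨fun h => Stmt6Aux.fwd_inj hP hQ h, fun h => by rw [h]⟩
          simp only [hiff]
  · -- spanning
    intro G hG
    have hfact : ∀ ω, G ω = G (ext (π ω)) := by
      intro ω
      have h3 := hG (measurableSet_singleton (G ω))
      rw [coordFilt, MeasurableSpace.measurableSet_comap] at h3
      obtain ⟨S, hS, hSeq⟩ := h3
      have hωmem : ω ∈ G ⁻¹' {G ω} := rfl
      rw [← hSeq] at hωmem
      have h2 : ext (π ω) ∈ (fun ω' (k : Fin (n + 1)) => ω' k.val) ⁻¹' S := by
        simp only [Set.mem_preimage]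
        have hre : (fun k : Fin (n + 1) => ext (π ω) k.val) = π ω := hπext (π ω)
        rw [hre]
        exact hωmem
      rw [hSeq] at h2
      exact (Set.mem_singleton_iff.mp h2).symm
    set F : (Fin (n + 1) → Fin (d + 1)) → ℝ := fun x => G (ext x) with hF
    refine ⟨fun P => if h : StrictMono P.2.1 then
        (∑ y, Stmt6Aux.wfun p y * (F y * Stmt6Aux.Tfun v (Stmt6Aux.fwdFun P) y)) else 0, ?_⟩
    intro ω
    rw [Stmt6Aux.sum_conv]
    have hcoefval : ∀ f : Fin (n + 1) → Fin (d + 1),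
        (if h : StrictMono ((Stmt6Aux.basisEquiv d n).symm f).1.2.1 then
          (∑ y, Stmt6Aux.wfun p y * (F y
            * Stmt6Aux.Tfun v (Stmt6Aux.fwdFun ((Stmt6Aux.basisEquiv d n).symm f).1) y)) else 0)
        = ∑ y, Stmt6Aux.wfun p y * (F y * Stmt6Aux.Tfun v f y) := by
      intro f
      rw [dif_pos ((Stmt6Aux.basisEquiv d n).symm f).2]
      have hfe : Stmt6Aux.fwdFun ((Stmt6Aux.basisEquiv d n).symm f).1 = f :=
        (Stmt6Aux.basisEquiv d n).apply_symm_apply f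
      rw [hfe]
    rw [Finset.sum_congr rfl (fun f _ => by rw [hcoefval f])]
    rw [← Stmt6Aux.complete_T p v hp hsum hv0 hv2 F (fun k => ω k.val)]
    exact hfact ω
  · -- linear independence
    intro coef hcoef P hP
    set c : (Fin (n + 1) → Fin (d + 1)) → ℝ :=
      fun f => coef ((Stmt6Aux.basisEquiv d n).symm f).1 with hc
    have hT0 : ∀ x, ∑ f, c f * Stmt6Aux.Tfun v f x = 0 := by
      intro x
      have h1 := hcoef (ext x)
      rw [Stmt6Aux.sum_conv] at h1
      have hππ : (fun k : Fin (n + 1) => ext x k.val) = x := hπext x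
      rw [hππ] at h1
      exact h1
    have horth : c (Stmt6Aux.fwdFun P) = 0 := by
      have key4 : c (Stmt6Aux.fwdFun P) = ∑ x, Stmt6Aux.wfun p x
          * ((∑ f, c f * Stmt6Aux.Tfun v f x) * Stmt6Aux.Tfun v (Stmt6Aux.fwdFun P) x) := by
        calc c (Stmt6Aux.fwdFun P)
            = ∑ f, c f * (if f = Stmt6Aux.fwdFun P then (1 : ℝ) else 0) := by
              simp [mul_ite]
          _ = ∑ f, c f * (∑ x, Stmt6Aux.wfun p x
                * (Stmt6Aux.Tfun v f x * Stmt6Aux.Tfun v (Stmt6Aux.fwdFun P) x)) := by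
              refine Finset.sum_congr rfl fun f _ => ?_
              rw [Stmt6Aux.inner_T p v hsum hv0 hv2 f (Stmt6Aux.fwdFun P)]
          _ = ∑ x, Stmt6Aux.wfun p x * ((∑ f, c f * Stmt6Aux.Tfun v f x)
                * Stmt6Aux.Tfun v (Stmt6Aux.fwdFun P) x) := by
              simp only [Finset.mul_sum, Finset.sum_mul]
              rw [Finset.sum_comm]
              exact Finset.sum_congr rfl fun x _ => Finset.sum_congr rfl fun f _ => by ring
      rw [key4]
      simp only [hT0, zero_mul, mul_zero, Finset.sum_const_zero]
    have hval : ((Stmt6Aux.basisEquiv d n).symm (Stmt6Aux.fwdFun P)).1 = P := by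
      have hsa := (Stmt6Aux.basisEquiv d n).symm_apply_apply ⟨P, hP⟩
      exact congrArg Subtype.val hsa
    have hfin : coef ((Stmt6Aux.basisEquiv d n).symm (Stmt6Aux.fwdFun P)).1 = 0 := horth
    rwa [hval] at hfin


end
end

section
/- For an obtuse random walk with i.i.d. increments, the gradient has the finite-difference representation: for any F: Ω → R and ω ∈ Ω = {0,...,d}^N, D_k^j F(ω) = Σ_{i=0}^d c_i^j(k) F(ω_i^k), where ω_i^k is ω with its k-th coordinate replaced by i. -/
open MeasureTheory Finset

noncomputable section

/-- The gradient `D_k^j` on the `r`-th chaos. -/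
def gradTerm {Ω : Type*} (d : ℕ) (Y : ℕ → Ω → Fin d → ℝ) :
    (r : ℕ) → ((Fin r → ℕ) → (Fin r → Fin d) → ℝ) → Fin d → ℕ → Ω → ℝ
  | 0, _, _, _, _ => 0
  | s + 1, f, j, k, ω =>
      ((s : ℝ) + 1) * multInt d s Y
        (fun i kk => if ∀ u, i u ≠ k then f (Fin.snoc i k) (Fin.snoc kk j) else 0) ω

/-- The symmetrized indicator `1̃_{(s_1,…,s_r)}^{i_1,…,i_r}`. -/
def symInd (d r : ℕ) (s : Fin r → ℕ) (idx : Fin r → Fin d)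
    (a : Fin r → ℕ) (b : Fin r → Fin d) : ℝ :=
  if ∃ σ : Equiv.Perm (Fin r), (∀ u, a u = s (σ u)) ∧ ∀ u, b u = idx (σ u) then
    ((r.factorial : ℝ))⁻¹ else 0

section Aux

/-- snoc of an injective tuple with a fresh value is injective. -/
lemma aux_snoc_inj {m : ℕ} {α : Type*} {a : Fin m → α} (ha : Function.Injective a)
    {x : α} (hx : ∀ u, a u ≠ x) :
    Function.Injective (Fin.snoc a x : Fin (m + 1) → α) := by
  intro y z h
  induction y using Fin.lastCases with
  | last =>
    induction z using Fin.lastCases with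
    | last => rfl
    | cast w =>
      rw [Fin.snoc_last, Fin.snoc_castSucc] at h
      exact absurd h.symm (hx w)
  | cast u =>
    induction z using Fin.lastCases with
    | last =>
      rw [Fin.snoc_last, Fin.snoc_castSucc] at h
      exact absurd h (hx u)
    | cast w =>
      rw [Fin.snoc_castSucc, Fin.snoc_castSucc] at h
      exact congrArg Fin.castSucc (ha h)

variable {d m : ℕ} (v : ℕ → Fin (d + 1) → Fin d → ℝ)
  {s : Fin (m + 1) → ℕ} (idx : Fin (m + 1) → Fin d)
  (t₀ : Fin (m + 1)) (j : Fin d)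

/-- Value of the symmetrized indicator at a tuple coming from a permutation. -/
lemma aux_symInd_val (hs : Function.Injective s) (π : Equiv.Perm (Fin m)) :
    symInd d (m + 1) s idx
      (Fin.snoc (fun u => s (t₀.succAbove (π u))) (s t₀))
      (Fin.snoc (fun u => idx (t₀.succAbove (π u))) j) =
    if j = idx t₀ then (((m + 1).factorial : ℝ))⁻¹ else 0 := by
  by_cases hj : j = idx t₀
  · rw [if_pos hj, symInd, if_pos]
    have hainj : Function.Injective (fun u => t₀.succAbove (π u)) :=
      Fin.succAbove_right_injective.comp π.injective
    have hane : ∀ u, t₀.succAbove (π u) ≠ t₀ := fun u => Fin.succAbove_ne t₀ (π u)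
    have hbij : Function.Bijective
        (Fin.snoc (fun u => t₀.succAbove (π u)) t₀ : Fin (m + 1) → Fin (m + 1)) :=
      (Finite.injective_iff_bijective).mp (aux_snoc_inj hainj hane)
    refine ⟨Equiv.ofBijective _ hbij, fun u => ?_, fun u => ?_⟩
    · show (Fin.snoc (fun u => s (t₀.succAbove (π u))) (s t₀) : Fin (m + 1) → ℕ) u =
        s ((Fin.snoc (fun u => t₀.succAbove (π u)) t₀ : Fin (m + 1) → Fin (m + 1)) u)
      induction u using Fin.lastCases with
      | last => rw [Fin.snoc_last, Fin.snoc_last]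
      | cast w => rw [Fin.snoc_castSucc, Fin.snoc_castSucc]
    · show (Fin.snoc (fun u => idx (t₀.succAbove (π u))) j : Fin (m + 1) → Fin d) u =
        idx ((Fin.snoc (fun u => t₀.succAbove (π u)) t₀ : Fin (m + 1) → Fin (m + 1)) u)
      induction u using Fin.lastCases with
      | last => rw [Fin.snoc_last, Fin.snoc_last, hj]
      | cast w => rw [Fin.snoc_castSucc, Fin.snoc_castSucc]
  · rw [if_neg hj, symInd, if_neg]
    rintro ⟨σ, h1, h2⟩
    have e1 := h1 (Fin.last m)
    rw [Fin.snoc_last] at e1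
    have e2 := h2 (Fin.last m)
    rw [Fin.snoc_last] at e2
    exact hj (by rw [e2, hs e1])

/-- Support extraction: a nonvanishing symmetrized indicator forces the tuple to come
from a permutation. -/
lemma aux_support (hs : Function.Injective s) {i : Fin m → ℕ} {kk : Fin m → Fin d}
    (h : symInd d (m + 1) s idx (Fin.snoc i (s t₀)) (Fin.snoc kk j) ≠ 0) :
    ∃ π : Equiv.Perm (Fin m),
      i = (fun u => s (t₀.succAbove (π u))) ∧ kk = (fun u => idx (t₀.succAbove (π u))) := by
  rw [symInd] at h
  have hex : ∃ σ : Equiv.Perm (Fin (m + 1)),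
      (∀ u, (Fin.snoc i (s t₀) : Fin (m + 1) → ℕ) u = s (σ u)) ∧
        ∀ u, (Fin.snoc kk j : Fin (m + 1) → Fin d) u = idx (σ u) := by
    by_contra hc
    rw [if_neg hc] at h
    exact h rfl
  obtain ⟨σ, h1, h2⟩ := hex
  have hlast : σ (Fin.last m) = t₀ := by
    have e1 := h1 (Fin.last m)
    rw [Fin.snoc_last] at e1
    exact (hs e1).symm
  have hne : ∀ u : Fin m, σ (Fin.castSucc u) ≠ t₀ := by
    intro u hu
    exact (Fin.castSucc_lt_last u).ne (σ.injective (hu.trans hlast.symm))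
  have hch : ∀ u : Fin m, ∃ z, t₀.succAbove z = σ (Fin.castSucc u) := fun u =>
    Fin.exists_succAbove_eq (hne u)
  set π₀ : Fin m → Fin m := fun u => (hch u).choose with hπ₀def
  have hπ₀ : ∀ u, t₀.succAbove (π₀ u) = σ (Fin.castSucc u) := fun u => (hch u).choose_spec
  have hπ₀inj : Function.Injective π₀ := by
    intro x y hxy
    have : σ (Fin.castSucc x) = σ (Fin.castSucc y) := by
      rw [← hπ₀, ← hπ₀, hxy]
    exact Fin.castSucc_injective m (σ.injective this)
  refine ⟨Equiv.ofBijective π₀ ((Finite.injective_iff_bijective).mp hπ₀inj), ?_, ?_⟩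
  · funext u
    have e := h1 (Fin.castSucc u)
    rw [Fin.snoc_castSucc] at e
    simpa [Equiv.ofBijective_apply, hπ₀ u] using e
  · funext u
    have e := h2 (Fin.castSucc u)
    rw [Fin.snoc_castSucc] at e
    simpa [Equiv.ofBijective_apply, hπ₀ u] using e

end Aux

/-- finite-difference representation of the gradient on the canonical
space `Ω = {0,…,d}^ℕ` with `Y_n(ω) = v_n(ω_n)` and `c_i^j(k) = p_k^i v_i^j(k)`:
for `F = Y_{s_1}^{i_1}⋯Y_{s_r}^{i_r}` (spanning the chaos), one has
`D_k^j F(ω) = Σ_{i=0}^d c_i^j(k) F(ω_i^k)`. -/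
theorem stmt_12 (d : ℕ)
    (p : ℕ → Fin (d + 1) → ℝ) (v : ℕ → Fin (d + 1) → Fin d → ℝ)
    (hp : ∀ k a, 0 < p k a)
    (hv0 : ∀ k j, ∑ a, p k a * v k a j = 0)
    (hv2 : ∀ k j l, ∑ a, p k a * v k a j * v k a l = if j = l then (1 : ℝ) else 0)
    (r : ℕ) (s : Fin r → ℕ) (hs : Function.Injective s) (idx : Fin r → Fin d)
    (k : ℕ) (j : Fin d) (ω : ℕ → Fin (d + 1)) :
    gradTerm d (fun n ω' => v n (ω' n)) r (symInd d r s idx) j k ω =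
      ∑ i : Fin (d + 1), p k i * v k i j *
        ∏ t, v (s t) (Function.update ω k i (s t)) (idx t) := by
  cases r with
  | zero =>
    simp only [gradTerm]
    simpa using (hv0 k j).symm
  | succ m =>
    by_cases hk : ∃ t₀, s t₀ = k
    · obtain ⟨t₀, ht₀⟩ := hk
      subst ht₀
      -- notation
      set Y : ℕ → (ℕ → Fin (d + 1)) → Fin d → ℝ := fun n ω' => v n (ω' n) with hY
      set Q : ℝ := ∏ u : Fin m,
        v (s (t₀.succAbove u)) (ω (s (t₀.succAbove u))) (idx (t₀.succAbove u)) with hQ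
      set δ : ℝ := if j = idx t₀ then (((m + 1).factorial : ℝ))⁻¹ else 0 with hδ
      -- the generic term of the multiple integral
      set F : (Fin m → ℕ) → (Fin m → Fin d) → ℝ := fun i kk =>
        if Function.Injective i then
          (if ∀ u, i u ≠ s t₀ then
            symInd d (m + 1) s idx (Fin.snoc i (s t₀)) (Fin.snoc kk j) else 0) *
            ∏ t, Y (i t) ω (kk t)
        else 0 with hF
      have hιinj : Function.Injective (fun u : Fin m => s (t₀.succAbove u)) :=
        hs.comp Fin.succAbove_right_injective
      -- value of F at tuples coming from a permutation
      have hval : ∀ π : Equiv.Perm (Fin m),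
          F (fun u => s (t₀.succAbove (π u))) (fun u => idx (t₀.succAbove (π u))) = δ * Q := by
        intro π
        have hinj : Function.Injective (fun u : Fin m => s (t₀.succAbove (π u))) :=
          hιinj.comp π.injective
        have hne : ∀ u : Fin m, s (t₀.succAbove (π u)) ≠ s t₀ := fun u =>
          fun h => Fin.succAbove_ne t₀ (π u) (hs h)
        simp only [hF]
        rw [if_pos hinj, if_pos hne]
        rw [aux_symInd_val idx t₀ j hs π, ← hδ]
        congr 1
        rw [hQ]
        exact Equiv.prod_comp π
          (fun u => v (s (t₀.succAbove u)) (ω (s (t₀.succAbove u))) (idx (t₀.succAbove u)))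
      -- support of F
      have hsupp : ∀ i kk, F i kk ≠ 0 → ∃ π : Equiv.Perm (Fin m),
          i = (fun u => s (t₀.succAbove (π u))) ∧
          kk = (fun u => idx (t₀.succAbove (π u))) := by
        intro i kk h
        simp only [hF] at h
        by_cases hinj : Function.Injective i
        · rw [if_pos hinj] at h
          by_cases hne : ∀ u, i u ≠ s t₀
          · rw [if_pos hne] at h
            exact aux_support idx t₀ j hs fun hz => h (by rw [hz, zero_mul])
          · rw [if_neg hne, zero_mul] at h; exact absurd rfl h
        · rw [if_neg hinj] at h; exact absurd rfl h
      -- evaluate the multiple integral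
      have hmult : multInt d m Y
          (fun i kk => if ∀ u, i u ≠ s t₀ then
            symInd d (m + 1) s idx (Fin.snoc i (s t₀)) (Fin.snoc kk j) else 0) ω =
          (m.factorial : ℝ) * (δ * Q) := by
        have hbody : ∀ i : Fin m → ℕ, (∑' kk : Fin m → Fin d,
            (if Function.Injective i then
              (if ∀ u, i u ≠ s t₀ then
                symInd d (m + 1) s idx (Fin.snoc i (s t₀)) (Fin.snoc kk j) else 0) *
                ∏ t, Y (i t) ω (kk t)
            else 0)) = ∑ kk : Fin m → Fin d, F i kk := by
          intro i
          rw [tsum_fintype]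
        rw [multInt]
        rw [tsum_congr hbody]
        set A : Finset (Fin m → ℕ) :=
          Finset.image (fun π : Equiv.Perm (Fin m) => fun u => s (t₀.succAbove (π u)))
            Finset.univ with hA
        rw [tsum_eq_sum (s := A) ?side]
        case side =>
          intro i hi
          refine Finset.sum_eq_zero fun kk _ => ?_
          by_contra h
          obtain ⟨π, hiπ, -⟩ := hsupp i kk h
          exact hi (by rw [hA]; exact Finset.mem_image.2 ⟨π, Finset.mem_univ _, hiπ.symm⟩)
        have hmapinj : ∀ π₁ ∈ (Finset.univ : Finset (Equiv.Perm (Fin m))),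
            ∀ π₂ ∈ (Finset.univ : Finset (Equiv.Perm (Fin m))),
            (fun u => s (t₀.succAbove (π₁ u))) = (fun u => s (t₀.succAbove (π₂ u))) →
            π₁ = π₂ := by
          intro π₁ _ π₂ _ h
          exact Equiv.ext fun u => Fin.succAbove_right_injective (hs (congrFun h u))
        rw [hA, Finset.sum_image hmapinj]
        have hinner : ∀ π : Equiv.Perm (Fin m),
            (∑ kk : Fin m → Fin d, F (fun u => s (t₀.succAbove (π u))) kk) = δ * Q := by
          intro π
          rw [Finset.sum_eq_single_of_mem (fun u => idx (t₀.succAbove (π u)))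
            (Finset.mem_univ _)]
          · exact hval π
          · intro kk _ hkkne
            by_contra h
            obtain ⟨π', hiπ, hkπ⟩ := hsupp _ kk h
            have : π = π' :=
              Equiv.ext fun u => Fin.succAbove_right_injective (hs (congrFun hiπ u))
            exact hkkne (by rw [hkπ, this])
        rw [Finset.sum_congr rfl fun π _ => hinner π, Finset.sum_const, Finset.card_univ,
          Fintype.card_perm, Fintype.card_fin, nsmul_eq_mul]
      -- compute the right-hand side
      have hrhs : ∀ i : Fin (d + 1),
          ∏ t, v (s t) (Function.update ω (s t₀) i (s t)) (idx t) = v (s t₀) i (idx t₀) * Q := by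
        intro i
        rw [Fin.prod_univ_succAbove
          (fun t => v (s t) (Function.update ω (s t₀) i (s t)) (idx t)) t₀]
        congr 1
        · rw [Function.update_self]
        · rw [hQ]
          refine Finset.prod_congr rfl fun u _ => ?_
          rw [Function.update_of_ne (fun h => Fin.succAbove_ne t₀ u (hs h))]
      simp only [gradTerm]
      rw [hmult]
      calc ((m : ℝ) + 1) * ((m.factorial : ℝ) * (δ * Q))
          = (if j = idx t₀ then (1 : ℝ) else 0) * Q := by
            rw [hδ]
            by_cases hj : j = idx t₀
            · rw [if_pos hj, if_pos hj]
              have hfac : (((m + 1).factorial : ℝ)) = ((m : ℝ) + 1) * (m.factorial : ℝ) := by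
                rw [Nat.factorial_succ]; push_cast; ring
              have hfacne : (((m + 1).factorial : ℝ)) ≠ 0 := by
                exact_mod_cast Nat.factorial_ne_zero (m + 1)
              field_simp [hfac]
              rw [hfac]
            · rw [if_neg hj, if_neg hj]; ring
        _ = ∑ i : Fin (d + 1), p (s t₀) i * v (s t₀) i j *
              ∏ t, v (s t) (Function.update ω (s t₀) i (s t)) (idx t) := by
            rw [Finset.sum_congr rfl fun i _ => by rw [hrhs i]]
            have : ∀ i : Fin (d + 1),
                p (s t₀) i * v (s t₀) i j * (v (s t₀) i (idx t₀) * Q) =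
                p (s t₀) i * v (s t₀) i j * v (s t₀) i (idx t₀) * Q := fun i => by ring
            rw [Finset.sum_congr rfl fun i _ => this i, ← Finset.sum_mul, hv2 (s t₀) j (idx t₀)]
    · push_neg at hk
      have hzero : ∀ (i : Fin m → ℕ) (kk : Fin m → Fin d),
          symInd d (m + 1) s idx (Fin.snoc i k) (Fin.snoc kk j) = 0 := by
        intro i kk
        rw [symInd, if_neg]
        rintro ⟨σ, h1, -⟩
        have e := h1 (Fin.last m)
        rw [Fin.snoc_last] at e
        exact hk (σ (Fin.last m)) e.symm
      have hmult : multInt d m (fun n ω' => v n (ω' n))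
          (fun i kk => if ∀ u, i u ≠ k then
            symInd d (m + 1) s idx (Fin.snoc i k) (Fin.snoc kk j) else 0) ω = 0 := by
        rw [multInt]
        have : ∀ (i : Fin m → ℕ) (kk : Fin m → Fin d),
            (if Function.Injective i then
              (if ∀ u, i u ≠ k then
                symInd d (m + 1) s idx (Fin.snoc i k) (Fin.snoc kk j) else 0) *
                ∏ t, v (i t) (ω (i t)) (kk t)
            else 0) = 0 := by
          intro i kk
          rw [hzero i kk]
          simp
        calc (∑' i : Fin m → ℕ, ∑' kk : Fin m → Fin d,
              (if Function.Injective i then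
                (if ∀ u, i u ≠ k then
                  symInd d (m + 1) s idx (Fin.snoc i k) (Fin.snoc kk j) else 0) *
                  ∏ t, v (i t) (ω (i t)) (kk t)
              else 0))
            = ∑' _ : Fin m → ℕ, ∑' _ : Fin m → Fin d, (0 : ℝ) :=
              tsum_congr fun i => tsum_congr fun kk => this i kk
          _ = 0 := by simp
      simp only [gradTerm]
      rw [hmult, mul_zero]
      have hupd : ∀ i : Fin (d + 1),
          ∏ t, v (s t) (Function.update ω k i (s t)) (idx t) =
          ∏ t, v (s t) (ω (s t)) (idx t) := fun i =>
        Finset.prod_congr rfl fun t _ => by rw [Function.update_of_ne (hk t)]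
      rw [Finset.sum_congr rfl fun i _ => by rw [hupd i]]
      rw [← Finset.sum_mul, hv0 k j, zero_mul]

end
end

section
/- Clark–Ocone formula: for any F ∈ L²(Ω) measurable with respect to the obtuse random walk, F = E[F] + Σ_{k=0}^∞ ⟨ E[D_k F | F_{k-1}], Y_k ⟩, with convergence in L²(Ω). -/
open MeasureTheory Finset ProbabilityTheory Filter ENNReal Matrix

set_option linter.unusedSectionVars false
set_option maxHeartbeats 1000000

noncomputable section

/-- The finite-difference gradient `D_k^j F(ω) = Σ_i c_i^j(k) F(ω_i^k)`,
`c_i^j(k) = p_k^i v_i^j(k)`. -/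
def fdGrad (d : ℕ) (p : ℕ → Fin (d + 1) → ℝ) (v : ℕ → Fin (d + 1) → Fin d → ℝ)
    (F : (ℕ → Fin (d + 1)) → ℝ) (k : ℕ) (j : Fin d) (ω : ℕ → Fin (d + 1)) : ℝ :=
  ∑ i, p k i * v k i j * F (Function.update ω k i)

namespace CO

variable {d : ℕ}

/-- cylinder on a finite set of coordinates -/
def cylS (d : ℕ) (s : Finset ℕ) (z : ℕ → Fin (d + 1)) : Set (ℕ → Fin (d + 1)) :=
  {ω | ∀ l ∈ s, ω l = z l}

/-- cylinder on first k coordinates -/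
def Cyl (d k : ℕ) (y : Fin k → Fin (d + 1)) : Set (ℕ → Fin (d + 1)) :=
  {ω | ∀ i : Fin k, ω i = y i}

lemma cylS_eq_iInter (s : Finset ℕ) (z : ℕ → Fin (d+1)) :
    cylS d s z = ⋂ l ∈ s, {ω : ℕ → Fin (d+1) | ω l = z l} := by
  ext ω; simp [cylS]

lemma measurableSet_cylS (s : Finset ℕ) (z : ℕ → Fin (d+1)) :
    MeasurableSet (cylS d s z) := by
  rw [cylS_eq_iInter]
  refine MeasurableSet.biInter s.countable_toSet (fun l _ => ?_)
  have : {ω : ℕ → Fin (d+1) | ω l = z l} = (fun ω : ℕ → Fin (d+1) => ω l) ⁻¹' {z l} := rfl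
  rw [this]
  exact (measurable_pi_apply l) (MeasurableSet.singleton (z l))

lemma Cyl_eq_cylS (k : ℕ) (y : Fin k → Fin (d+1)) :
    Cyl d k y = cylS d (Finset.range k) (fun l => if h : l < k then y ⟨l, h⟩ else 0) := by
  ext ω
  constructor
  · intro h l hl
    rw [Finset.mem_range] at hl
    simpa [hl] using h ⟨l, hl⟩
  · intro h i
    have := h i (Finset.mem_range.2 i.isLt)
    simpa [i.isLt] using this

lemma measurableSet_Cyl (k : ℕ) (y : Fin k → Fin (d+1)) : MeasurableSet (Cyl d k y) := by
  rw [Cyl_eq_cylS]; exact measurableSet_cylS _ _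

variable {μ : Measure (ℕ → Fin (d + 1))} [IsProbabilityMeasure μ]
  {p : ℕ → Fin (d + 1) → ℝ}

lemma meas_cylS
    (hmarg : ∀ k a, μ {ω | ω k = a} = ENNReal.ofReal (p k a))
    (hindep : iIndepFun (fun k (ω : ℕ → Fin (d + 1)) => ω k) μ)
    (s : Finset ℕ) (z : ℕ → Fin (d+1)) :
    μ (cylS d s z) = ∏ l ∈ s, ENNReal.ofReal (p l (z l)) := by
  rw [cylS_eq_iInter]
  rw [hindep.meas_biInter (s := fun l => {ω : ℕ → Fin (d+1) | ω l = z l})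
    (fun l _ => ⟨{z l}, trivial, rfl⟩)]
  exact Finset.prod_congr rfl fun l _ => hmarg l (z l)

lemma meas_Cyl
    (hmarg : ∀ k a, μ {ω | ω k = a} = ENNReal.ofReal (p k a))
    (hindep : iIndepFun (fun k (ω : ℕ → Fin (d + 1)) => ω k) μ)
    (k : ℕ) (y : Fin k → Fin (d+1)) :
    μ (Cyl d k y) = ∏ i : Fin k, ENNReal.ofReal (p i (y i)) := by
  rw [Cyl_eq_cylS, meas_cylS hmarg hindep]
  rw [← Fin.prod_univ_eq_prod_range]
  exact Finset.prod_congr rfl fun i _ => by simp [i.isLt]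

section PSum

variable (hp : ∀ k a, 0 < p k a)
  (hmarg : ∀ k a, μ {ω | ω k = a} = ENNReal.ofReal (p k a))

include hp hmarg in
lemma psum (k : ℕ) : ∑ a, p k a = 1 := by
  have hdis : Pairwise (Function.onFun Disjoint fun a : Fin (d+1) => {ω : ℕ → Fin (d+1) | ω k = a}) := by
    intro a b hab
    refine Set.disjoint_left.2 fun ω ha hb => hab ?_
    rw [← ha, ← hb]
  have hmeas : ∀ a : Fin (d+1), MeasurableSet {ω : ℕ → Fin (d+1) | ω k = a} := by
    intro a
    have : {ω : ℕ → Fin (d+1) | ω k = a} = (fun ω : ℕ → Fin (d+1) => ω k) ⁻¹' {a} := rfl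
    rw [this]; exact (measurable_pi_apply k) (MeasurableSet.singleton a)
  have huniv : (⋃ a : Fin (d+1), {ω : ℕ → Fin (d+1) | ω k = a}) = Set.univ := by
    ext ω; simp
  have h1 : (1 : ℝ≥0∞) = ∑ a : Fin (d+1), ENNReal.ofReal (p k a) := by
    rw [← measure_univ (μ := μ), ← huniv, measure_iUnion hdis hmeas, tsum_fintype]
    exact Finset.sum_congr rfl fun a _ => hmarg k a
  rw [← ENNReal.ofReal_sum_of_nonneg (fun a _ => (hp k a).le)] at h1
  have := ENNReal.ofReal_eq_one.mp h1.symm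
  linarith [this]

end PSum

lemma vv {d : ℕ} {p : Fin (d+1) → ℝ} {v : Fin (d+1) → Fin d → ℝ}
    (hp : ∀ a, 0 < p a) (hsum : ∑ a, p a = 1)
    (hv0 : ∀ j, ∑ a, p a * v a j = 0)
    (hv2 : ∀ j l, ∑ a, p a * v a j * v a l = if j = l then (1 : ℝ) else 0)
    (a b : Fin (d+1)) :
    ∑ j, v a j * v b j = (if a = b then 1 / p a else 0) - 1 := by
  classical
  set q : Fin (d+1) → ℝ := fun a => Real.sqrt (p a) with hq
  have hq0 : ∀ a, 0 < q a := fun a => Real.sqrt_pos.2 (hp a)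
  have hqq : ∀ a, q a * q a = p a := fun a => Real.mul_self_sqrt (hp a).le
  set M : Matrix (Fin (d+1)) (Fin (d+1)) ℝ :=
    fun a c => Fin.cases (q a) (fun j => q a * v a j) c with hM
  have hMtM : Mᵀ * M = 1 := by
    ext c c'
    rw [Matrix.mul_apply]
    simp only [Matrix.transpose_apply, Matrix.one_apply]
    induction c using Fin.cases with
    | zero =>
      induction c' using Fin.cases with
      | zero =>
        simp only [hM, Fin.cases_zero, if_pos rfl]
        calc ∑ a, q a * q a = ∑ a, p a := by simp [hqq]
        _ = 1 := hsum
      | succ j =>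
        have : (0 : Fin (d+1)) ≠ j.succ := (Fin.succ_ne_zero j).symm
        rw [if_neg this]
        calc ∑ a, M a 0 * M a j.succ = ∑ a, p a * v a j := by
              simp only [hM, Fin.cases_zero, Fin.cases_succ]
              refine Finset.sum_congr rfl fun a _ => ?_
              rw [← hqq a]; ring
        _ = 0 := hv0 j
    | succ j =>
      induction c' using Fin.cases with
      | zero =>
        rw [if_neg (Fin.succ_ne_zero j)]
        calc ∑ a, M a j.succ * M a 0 = ∑ a, p a * v a j := by
              simp only [hM, Fin.cases_zero, Fin.cases_succ]
              refine Finset.sum_congr rfl fun a _ => ?_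
              rw [← hqq a]; ring
        _ = 0 := hv0 j
      | succ l =>
        have hiff : (j.succ = l.succ) ↔ (j = l) := ⟨fun h => Fin.succ_injective _ h, fun h => by rw [h]⟩
        calc ∑ a, M a j.succ * M a l.succ = ∑ a, p a * v a j * v a l := by
              simp only [hM, Fin.cases_succ]
              refine Finset.sum_congr rfl fun a _ => ?_
              rw [← hqq a]; ring
        _ = if j = l then 1 else 0 := hv2 j l
        _ = if j.succ = l.succ then 1 else 0 := by simp [hiff]
  have hMMt : M * Mᵀ = 1 := mul_eq_one_comm.mp hMtM
  have hab := congrFun (congrFun hMMt a) b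
  rw [Matrix.mul_apply] at hab
  simp only [Matrix.transpose_apply, Matrix.one_apply] at hab
  have hexp : ∑ c, M a c * M b c = q a * q b * (1 + ∑ j, v a j * v b j) := by
    rw [Fin.sum_univ_succ]
    simp only [hM, Fin.cases_zero, Fin.cases_succ]
    rw [mul_add, mul_one, Finset.mul_sum]
    congr 1
    exact Finset.sum_congr rfl fun j _ => by ring
  rw [hexp] at hab
  by_cases h : a = b
  · subst h
    rw [if_pos rfl] at hab ⊢
    have hpa := hp a
    have hq2 : q a * q a = p a := hqq a
    have hne : p a ≠ 0 := ne_of_gt hpa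
    rw [hq2] at hab
    rw [eq_sub_iff_add_eq, eq_div_iff hne]
    linear_combination hab
  · rw [if_neg h] at hab ⊢
    have h1 : 1 + ∑ j, v a j * v b j = 0 := by
      have hne : q a * q b ≠ 0 := ne_of_gt (mul_pos (hq0 a) (hq0 b))
      rcases mul_eq_zero.mp hab with h'|h'
      · exact absurd h' hne
      · exact h'
    linarith


/-- the collection of cylinder sets -/
def cylC (d : ℕ) : Set (Set (ℕ → Fin (d+1))) :=
  {E | ∃ s z, E = cylS d s z}

lemma isPiSystem_cylC : IsPiSystem (cylC d) := by
  rintro E ⟨s, z, rfl⟩ E' ⟨s', z', rfl⟩ hne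
  obtain ⟨ω, hω, hω'⟩ := hne
  classical
  refine ⟨s ∪ s', fun l => if l ∈ s then z l else z' l, ?_⟩
  ext ω'
  simp only [Set.mem_inter_iff, cylS, Set.mem_setOf_eq, Finset.mem_union]
  constructor
  · rintro ⟨h1, h2⟩ l hl
    by_cases hls : l ∈ s
    · simpa [hls] using h1 l hls
    · have hls' : l ∈ s' := hl.resolve_left hls
      simpa [hls] using h2 l hls'
  · intro h
    constructor
    · intro l hl
      simpa [hl] using h l (Or.inl hl)
    · intro l hl
      by_cases hls : l ∈ s
      · have h1 := hω l hls
        have h2 := hω' l hl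
        have := h l (Or.inl hls)
        simp only [if_pos hls] at this
        rw [this, ← h1, h2]
      · simpa [hls] using h l (Or.inr hl)

lemma generateFrom_cylC :
    (inferInstance : MeasurableSpace (ℕ → Fin (d+1))) = MeasurableSpace.generateFrom (cylC d) := by
  classical
  apply le_antisymm
  · rw [show (inferInstance : MeasurableSpace (ℕ → Fin (d+1))) = MeasurableSpace.pi from rfl,
      MeasurableSpace.pi_eq_generateFrom_projections]
    refine MeasurableSpace.generateFrom_le ?_
    rintro E ⟨l, T, -, rfl⟩
    have : (fun ω : ℕ → Fin (d+1) => ω l) ⁻¹' T = ⋃ a ∈ T, cylS d {l} (fun _ => a) := by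
      ext ω
      simp [cylS]
    rw [this]
    refine MeasurableSet.biUnion T.to_countable fun a _ => ?_
    exact MeasurableSpace.measurableSet_generateFrom ⟨{l}, fun _ => a, rfl⟩
  · refine MeasurableSpace.generateFrom_le ?_
    rintro E ⟨s, z, rfl⟩
    have : cylS d s z = ⋂ l ∈ s, (fun ω : ℕ → Fin (d+1) => ω l) ⁻¹' {z l} := by
      ext ω; simp [cylS]
    rw [this]
    exact MeasurableSet.biInter s.countable_toSet
      (fun l _ => (measurable_pi_apply l) (MeasurableSet.singleton (z l)))

lemma measurable_updateFun (k : ℕ) (i : Fin (d+1)) :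
    Measurable (fun ω : ℕ → Fin (d+1) => Function.update ω k i) := by
  refine measurable_pi_lambda _ fun l => ?_
  by_cases h : l = k
  · subst h
    simp only [Function.update_self]
    exact measurable_const
  · simp only [Function.update_of_ne h]
    exact measurable_pi_apply l


section Update

variable (hp : ∀ k a, 0 < p k a)
  (hmarg : ∀ k a, μ {ω | ω k = a} = ENNReal.ofReal (p k a))
  (hindep : iIndepFun (fun k (ω : ℕ → Fin (d + 1)) => ω k) μ)

include hp hmarg hindep in
lemma restrict_eq_smul_map (k : ℕ) (i : Fin (d+1)) :
    μ.restrict {ω | ω k = i}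
      = ENNReal.ofReal (p k i) • μ.map (fun ω : ℕ → Fin (d+1) => Function.update ω k i) := by
  classical
  set U : (ℕ → Fin (d+1)) → (ℕ → Fin (d+1)) := fun ω => Function.update ω k i with hU
  have hUm : Measurable U := measurable_updateFun k i
  have hAm : MeasurableSet {ω : ℕ → Fin (d+1) | ω k = i} := by
    have : {ω : ℕ → Fin (d+1) | ω k = i} = (fun ω : ℕ → Fin (d+1) => ω k) ⁻¹' {i} := rfl
    rw [this]; exact (measurable_pi_apply k) (MeasurableSet.singleton i)
  refine ext_of_generate_finite (cylC d) generateFrom_cylC isPiSystem_cylC ?_ ?_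
  · rintro E ⟨s, z, rfl⟩
    rw [Measure.restrict_apply (measurableSet_cylS s z),
      Measure.smul_apply, Measure.map_apply hUm (measurableSet_cylS s z)]
    by_cases hk : k ∈ s
    · by_cases hzi : z k = i
      · have h1 : cylS d s z ∩ {ω | ω k = i} = cylS d s z := by
          refine Set.inter_eq_self_of_subset_left fun ω hω => ?_
          have := hω k hk
          simp only [Set.mem_setOf_eq]
          rw [this, hzi]
        have h2 : U ⁻¹' cylS d s z = cylS d (s.erase k) z := by
          ext ω
          simp only [Set.mem_preimage, cylS, Set.mem_setOf_eq, hU, Finset.mem_erase]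
          constructor
          · intro h l hl
            have := h l hl.2
            rwa [Function.update_of_ne hl.1] at this
          · intro h l hl
            by_cases hlk : l = k
            · subst hlk
              rw [Function.update_self, hzi]
            · rw [Function.update_of_ne hlk]
              exact h l ⟨hlk, hl⟩
        rw [h1, h2, meas_cylS hmarg hindep, meas_cylS hmarg hindep, smul_eq_mul]
        rw [← Finset.mul_prod_erase s _ hk, hzi]
      · have h1 : cylS d s z ∩ {ω | ω k = i} = ∅ := by
          ext ω
          simp only [Set.mem_inter_iff, Set.mem_setOf_eq, Set.mem_empty_iff_false, iff_false,
            not_and]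
          intro hω hωk
          exact hzi (by rw [← hω k hk, hωk])
        have h2 : U ⁻¹' cylS d s z = ∅ := by
          ext ω
          simp only [Set.mem_preimage, cylS, Set.mem_setOf_eq, Set.mem_empty_iff_false, iff_false]
          intro h
          have := h k hk
          rw [hU] at this
          simp only [Function.update_self] at this
          exact hzi this.symm
        rw [h1, h2]
        simp
    · have h1 : cylS d s z ∩ {ω | ω k = i} = cylS d (insert k s) (Function.update z k i) := by
        ext ω
        simp only [Set.mem_inter_iff, cylS, Set.mem_setOf_eq, Finset.mem_insert]
        constructor
        · rintro ⟨h, hωk⟩ l hl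
          rcases hl with rfl | hl
          · rw [Function.update_self]; exact hωk
          · rw [Function.update_of_ne (by rintro rfl; exact hk hl)]
            exact h l hl
        · intro h
          constructor
          · intro l hl
            have := h l (Or.inr hl)
            rwa [Function.update_of_ne (by rintro rfl; exact hk hl)] at this
          · have := h k (Or.inl rfl)
            rwa [Function.update_self] at this
      have h2 : U ⁻¹' cylS d s z = cylS d s z := by
        ext ω
        simp only [Set.mem_preimage, cylS, Set.mem_setOf_eq, hU]
        constructor
        · intro h l hl
          have := h l hl
          rwa [Function.update_of_ne (by rintro rfl; exact hk hl)] at this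
        · intro h l hl
          rw [Function.update_of_ne (by rintro rfl; exact hk hl)]
          exact h l hl
      rw [h1, h2, meas_cylS hmarg hindep, meas_cylS hmarg hindep, smul_eq_mul,
        Finset.prod_insert hk, Function.update_self]
      congr 1
      exact Finset.prod_congr rfl fun l hl => by
        rw [Function.update_of_ne (by rintro rfl; exact hk hl)]
  · rw [Measure.restrict_apply_univ, Measure.smul_apply, Measure.map_apply hUm MeasurableSet.univ]
    simp [hmarg k i]

include hp hmarg hindep in
lemma integrable_comp_update {f : (ℕ → Fin (d+1)) → ℝ} (hf : Integrable f μ)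
    (k : ℕ) (i : Fin (d+1)) :
    Integrable (fun ω => f (Function.update ω k i)) μ := by
  have hUm : Measurable (fun ω : ℕ → Fin (d+1) => Function.update ω k i) :=
    measurable_updateFun k i
  have hmap : μ.map (fun ω : ℕ → Fin (d+1) => Function.update ω k i)
      = (ENNReal.ofReal (p k i))⁻¹ • μ.restrict {ω | ω k = i} := by
    rw [restrict_eq_smul_map hp hmarg hindep k i, smul_smul,
      ENNReal.inv_mul_cancel (by simp [hp k i]) ENNReal.ofReal_ne_top, one_smul]
  have : Integrable f (μ.map (fun ω : ℕ → Fin (d+1) => Function.update ω k i)) := by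
    rw [hmap]
    exact (hf.restrict).smul_measure (by simp [hp k i])
  exact (integrable_map_measure this.aestronglyMeasurable hUm.aemeasurable).mp this

include hp hmarg hindep in
/-- key transfer identity for integrals over sets not depending on coordinate `k` -/
lemma integral_update (f : (ℕ → Fin (d+1)) → ℝ) (hf : Integrable f μ)
    (k : ℕ) (i : Fin (d+1)) :
    p k i * ∫ ω, f (Function.update ω k i) ∂μ = ∫ ω in {ω | ω k = i}, f ω ∂μ := by
  have hUm : Measurable (fun ω : ℕ → Fin (d+1) => Function.update ω k i) :=
    measurable_updateFun k i
  have hmap : μ.map (fun ω : ℕ → Fin (d+1) => Function.update ω k i)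
      = (ENNReal.ofReal (p k i))⁻¹ • μ.restrict {ω | ω k = i} := by
    rw [restrict_eq_smul_map hp hmarg hindep k i, smul_smul,
      ENNReal.inv_mul_cancel (by simp [hp k i]) ENNReal.ofReal_ne_top, one_smul]
  have hfm : AEStronglyMeasurable f (μ.map (fun ω : ℕ → Fin (d+1) => Function.update ω k i)) := by
    rw [hmap]
    exact (hf.aestronglyMeasurable.restrict).smul_measure _
  rw [← integral_map hUm.aemeasurable hfm, hmap, integral_smul_measure]
  rw [ENNReal.toReal_inv, ENNReal.toReal_ofReal (hp k i).le]
  rw [smul_eq_mul, ← mul_assoc, mul_inv_cancel₀ (ne_of_gt (hp k i)), one_mul]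

end Update

section CondE

def proj (d k : ℕ) : (ℕ → Fin (d+1)) → (Fin k → Fin (d+1)) := fun ω i => ω i

/-- explicit conditional expectation given the first `k` coordinates -/
def condE (d : ℕ) (μ : Measure (ℕ → Fin (d+1))) (k : ℕ) (f : (ℕ → Fin (d+1)) → ℝ)
    (ω : ℕ → Fin (d+1)) : ℝ :=
  (∫ x in Cyl d k (proj d k ω), f x ∂μ) / (μ (Cyl d k (proj d k ω))).toReal

/-- value of condE on a cylinder -/
def cval (d : ℕ) (μ : Measure (ℕ → Fin (d+1))) (k : ℕ) (f : (ℕ → Fin (d+1)) → ℝ)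
    (y : Fin k → Fin (d+1)) : ℝ :=
  (∫ x in Cyl d k y, f x ∂μ) / (μ (Cyl d k y)).toReal

lemma mem_Cyl {k : ℕ} {y : Fin k → Fin (d+1)} {ω : ℕ → Fin (d+1)} :
    ω ∈ Cyl d k y ↔ proj d k ω = y := by
  simp [Cyl, proj, funext_iff]

lemma self_mem_Cyl (k : ℕ) (ω : ℕ → Fin (d+1)) : ω ∈ Cyl d k (proj d k ω) :=
  mem_Cyl.mpr rfl

lemma condE_eq_cval (k : ℕ) (f : (ℕ → Fin (d+1)) → ℝ) (ω : ℕ → Fin (d+1)) :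
    condE d μ k f ω = cval d μ k f (proj d k ω) := rfl

lemma Cyl_disjoint {k : ℕ} {y y' : Fin k → Fin (d+1)} (h : y ≠ y') :
    Disjoint (Cyl d k y) (Cyl d k y') := by
  refine Set.disjoint_left.2 fun ω hω hω' => h ?_
  rw [← mem_Cyl.mp hω, ← mem_Cyl.mp hω']

variable (hp : ∀ k a, 0 < p k a)
  (hmarg : ∀ k a, μ {ω | ω k = a} = ENNReal.ofReal (p k a))
  (hindep : iIndepFun (fun k (ω : ℕ → Fin (d + 1)) => ω k) μ)

include hp hmarg hindep in
lemma meas_Cyl_pos (k : ℕ) (y : Fin k → Fin (d+1)) : 0 < μ (Cyl d k y) := by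
  rw [meas_Cyl hmarg hindep, pos_iff_ne_zero, Finset.prod_ne_zero_iff]
  exact fun i _ => (ENNReal.ofReal_pos.2 (hp i (y i))).ne'

include hp hmarg hindep in
lemma toReal_meas_Cyl_pos (k : ℕ) (y : Fin k → Fin (d+1)) : 0 < (μ (Cyl d k y)).toReal :=
  ENNReal.toReal_pos (meas_Cyl_pos hp hmarg hindep k y).ne' (measure_ne_top μ _)

/-- the sets of `Fprev (coordFilt d) k` are exactly preimages under `proj d k` -/
lemma measurableSet_Fprev_iff (k : ℕ) (s : Set (ℕ → Fin (d+1))) :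
    MeasurableSet[Fprev (coordFilt d) k] s ↔ ∃ T : Set (Fin k → Fin (d+1)), s = proj d k ⁻¹' T := by
  cases k with
  | zero =>
    constructor
    · intro hs
      rcases (MeasurableSpace.measurableSet_bot_iff.mp hs : s = ∅ ∨ s = Set.univ) with rfl | rfl
      · exact ⟨∅, by simp⟩
      · exact ⟨Set.univ, by simp⟩
    · rintro ⟨T, rfl⟩
      rcases Set.eq_empty_or_nonempty T with rfl | ⟨y, hy⟩
      · simpa [Fprev, MeasurableSpace.measurableSet_bot_iff] using Or.inl rfl
      · have : proj d 0 ⁻¹' T = Set.univ := by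
          ext ω
          simp only [Set.mem_preimage, Set.mem_univ, iff_true]
          have : proj d 0 ω = y := Subsingleton.elim _ _
          rw [this]; exact hy
        rw [this]
        simpa [Fprev, MeasurableSpace.measurableSet_bot_iff] using Or.inr rfl
  | succ n =>
    show MeasurableSet[coordFilt d n] s ↔ _
    rw [coordFilt, MeasurableSpace.measurableSet_comap]
    constructor
    · rintro ⟨T, -, rfl⟩
      exact ⟨T, rfl⟩
    · rintro ⟨T, rfl⟩
      exact ⟨T, T.toFinite.measurableSet, rfl⟩

lemma Fprev_le (k : ℕ) :
    Fprev (coordFilt d) k ≤ (inferInstance : MeasurableSpace (ℕ → Fin (d+1))) := by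
  intro s hs
  obtain ⟨T, rfl⟩ := (measurableSet_Fprev_iff k s).mp hs
  exact (measurable_pi_lambda _ fun i => measurable_pi_apply _) T.toFinite.measurableSet

lemma measurable_Fprev_of_proj (k : ℕ) (G : (Fin k → Fin (d+1)) → ℝ) :
    Measurable[Fprev (coordFilt d) k] (fun ω => G (proj d k ω)) := by
  intro B _
  exact (measurableSet_Fprev_iff k _).mpr ⟨G ⁻¹' B, rfl⟩

lemma stronglyMeasurable_condE (k : ℕ) (f : (ℕ → Fin (d+1)) → ℝ) :
    StronglyMeasurable[Fprev (coordFilt d) k] (condE d μ k f) :=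
  (measurable_Fprev_of_proj k (cval d μ k f)).stronglyMeasurable

/-- representation of `condE` as a finite sum of indicators -/
lemma condE_repr (k : ℕ) (f : (ℕ → Fin (d+1)) → ℝ) (ω : ℕ → Fin (d+1)) :
    condE d μ k f ω
      = ∑ y : Fin k → Fin (d+1), Set.indicator (Cyl d k y) (fun _ => cval d μ k f y) ω := by
  classical
  rw [Finset.sum_eq_single (proj d k ω)]
  · rw [Set.indicator_of_mem (self_mem_Cyl k ω), condE_eq_cval]
  · intro y _ hy
    exact Set.indicator_of_notMem (fun h => hy (mem_Cyl.mp h).symm) _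
  · intro h
    exact absurd (Finset.mem_univ _) h

lemma integrable_condE (k : ℕ) (f : (ℕ → Fin (d+1)) → ℝ) :
    Integrable (condE d μ k f) μ := by
  have : condE d μ k f
      = fun ω => ∑ y : Fin k → Fin (d+1), Set.indicator (Cyl d k y) (fun _ => cval d μ k f y) ω :=
    funext (condE_repr k f)
  rw [this]
  exact integrable_finset_sum _ fun y _ =>
    (integrable_const _).indicator (measurableSet_Cyl k y)

include hp hmarg hindep in
lemma setIntegral_condE_cyl (k : ℕ) (f : (ℕ → Fin (d+1)) → ℝ) (y : Fin k → Fin (d+1)) :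
    ∫ x in Cyl d k y, condE d μ k f x ∂μ = ∫ x in Cyl d k y, f x ∂μ := by
  have hconst : ∀ x ∈ Cyl d k y, condE d μ k f x = cval d μ k f y := by
    intro x hx
    rw [condE_eq_cval, mem_Cyl.mp hx]
  rw [setIntegral_congr_fun (measurableSet_Cyl k y) hconst, setIntegral_const, smul_eq_mul, measureReal_def,
    cval, mul_div_assoc', mul_comm, mul_div_assoc,
    div_self (toReal_meas_Cyl_pos hp hmarg hindep k y).ne', mul_one]

lemma preimage_eq_biUnion (k : ℕ) (T : Set (Fin k → Fin (d+1))) :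
    proj d k ⁻¹' T = ⋃ y ∈ T.toFinite.toFinset, Cyl d k y := by
  ext ω
  simp only [Set.mem_preimage, Set.mem_iUnion, Set.Finite.mem_toFinset]
  constructor
  · intro h
    exact ⟨proj d k ω, h, self_mem_Cyl k ω⟩
  · rintro ⟨y, hy, hmem⟩
    rwa [mem_Cyl.mp hmem]

include hp hmarg hindep in
lemma condE_ae_eq_condexp (k : ℕ) (f : (ℕ → Fin (d+1)) → ℝ) (hf : Integrable f μ) :
    condE d μ k f =ᵐ[μ] μ[f | Fprev (coordFilt d) k] := by
  classical
  have hle := Fprev_le (d := d) k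
  refine ae_eq_condExp_of_forall_setIntegral_eq hle hf
    (fun s _ _ => (integrable_condE k f).integrableOn) ?_ ?_
  · intro s hs _
    obtain ⟨T, rfl⟩ := (measurableSet_Fprev_iff k s).mp hs
    rw [preimage_eq_biUnion,
      integral_biUnion_finset _ (fun y _ => measurableSet_Cyl k y)
        (fun y _ y' _ h => Cyl_disjoint h)
        (fun y _ => (integrable_condE k f).integrableOn),
      integral_biUnion_finset _ (fun y _ => measurableSet_Cyl k y)
        (fun y _ y' _ h => Cyl_disjoint h)
        (fun y _ => hf.integrableOn)]
    exact Finset.sum_congr rfl fun y _ => setIntegral_condE_cyl hp hmarg hindep k f y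
  · exact (stronglyMeasurable_condE k f).aestronglyMeasurable

end CondE

section Step

variable (hp : ∀ k a, 0 < p k a)
  (hmarg : ∀ k a, μ {ω | ω k = a} = ENNReal.ofReal (p k a))
  (hindep : iIndepFun (fun k (ω : ℕ → Fin (d + 1)) => ω k) μ)

lemma Cyl_succ (k : ℕ) (ω : ℕ → Fin (d+1)) :
    Cyl d (k+1) (proj d (k+1) ω) = Cyl d k (proj d k ω) ∩ {x | x k = ω k} := by
  ext x
  simp only [Cyl, proj, Set.mem_setOf_eq, Set.mem_inter_iff]
  constructor
  · intro h
    exact ⟨fun i => h ⟨i.1, Nat.lt_succ_of_lt i.2⟩, h ⟨k, Nat.lt_succ_self k⟩⟩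
  · rintro ⟨h1, h2⟩ i
    rcases Nat.lt_succ_iff_lt_or_eq.mp i.2 with h | h
    · exact h1 ⟨i.1, h⟩
    · have : (i : ℕ) = k := h
      simp only [this]
      exact h2

include hmarg hindep in
lemma meas_Cyl_succ (k : ℕ) (ω : ℕ → Fin (d+1)) :
    μ (Cyl d (k+1) (proj d (k+1) ω))
      = μ (Cyl d k (proj d k ω)) * ENNReal.ofReal (p k (ω k)) := by
  rw [meas_Cyl hmarg hindep, meas_Cyl hmarg hindep, Fin.prod_univ_castSucc]
  simp [proj]

lemma measurableSet_coordEq (k : ℕ) (a : Fin (d+1)) :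
    MeasurableSet {x : ℕ → Fin (d+1) | x k = a} := by
  have : {x : ℕ → Fin (d+1) | x k = a} = (fun x : ℕ → Fin (d+1) => x k) ⁻¹' {a} := rfl
  rw [this]; exact (measurable_pi_apply k) (MeasurableSet.singleton a)

include hp hmarg hindep in
lemma setIntegral_update_cyl {f : (ℕ → Fin (d+1)) → ℝ} (hf : Integrable f μ)
    (k : ℕ) (i : Fin (d+1)) (y : Fin k → Fin (d+1)) :
    p k i * ∫ x in Cyl d k y, f (Function.update x k i) ∂μ
      = ∫ x in Cyl d k y ∩ {x | x k = i}, f x ∂μ := by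
  set C := Cyl d k y with hC
  have hCm : MeasurableSet C := measurableSet_Cyl k y
  have hkey : ∀ x : ℕ → Fin (d+1), C.indicator (fun x => f (Function.update x k i)) x
      = C.indicator f (Function.update x k i) := by
    intro x
    have hmem : x ∈ C ↔ Function.update x k i ∈ C := by
      simp only [hC, Cyl, Set.mem_setOf_eq]
      refine forall_congr' fun l => ?_
      rw [Function.update_of_ne (by exact_mod_cast Nat.ne_of_lt l.2)]
    by_cases hx : x ∈ C
    · rw [Set.indicator_of_mem hx, Set.indicator_of_mem (hmem.mp hx)]
    · rw [Set.indicator_of_notMem hx, Set.indicator_of_notMem (fun h => hx (hmem.mpr h))]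
  calc p k i * ∫ x in C, f (Function.update x k i) ∂μ
      = p k i * ∫ x, C.indicator (fun x => f (Function.update x k i)) x ∂μ := by
        rw [integral_indicator hCm]
    _ = p k i * ∫ x, C.indicator f (Function.update x k i) ∂μ := by
        congr 1
        exact integral_congr_ae (Filter.Eventually.of_forall hkey)
    _ = ∫ x in {x | x k = i}, C.indicator f x ∂μ :=
        integral_update hp hmarg hindep _ (hf.indicator hCm) k i
    _ = ∫ x in {x | x k = i} ∩ C, f x ∂μ := setIntegral_indicator hCm
    _ = ∫ x in C ∩ {x | x k = i}, f x ∂μ := by rw [Set.inter_comm]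

lemma setIntegral_partition {f : (ℕ → Fin (d+1)) → ℝ} (hf : Integrable f μ)
    (k : ℕ) (y : Fin k → Fin (d+1)) :
    ∫ x in Cyl d k y, f x ∂μ
      = ∑ a : Fin (d+1), ∫ x in Cyl d k y ∩ {x | x k = a}, f x ∂μ := by
  have hU : Cyl d k y = ⋃ a ∈ (Finset.univ : Finset (Fin (d+1))),
      Cyl d k y ∩ {x | x k = a} := by
    refine le_antisymm (fun x hx => Set.mem_biUnion (Finset.mem_univ (x k)) ?_)
      (Set.iUnion₂_subset fun a _ => Set.inter_subset_left)
    exact ⟨hx, rfl⟩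
  have := integral_biUnion_finset (μ := μ) (f := f) Finset.univ
    (fun a _ => (measurableSet_Cyl k y).inter (measurableSet_coordEq k a))
    (fun a _ b _ hab => by
      refine Set.disjoint_left.2 fun x hx hx' => hab ?_
      rw [← hx.2, ← hx'.2])
    (fun a _ => hf.integrableOn)
  rw [← hU] at this
  exact this

variable (v : ℕ → Fin (d + 1) → Fin d → ℝ)
  (hv0 : ∀ k j, ∑ a, p k a * v k a j = 0)
  (hv2 : ∀ k j l, ∑ a, p k a * v k a j * v k a l = if j = l then (1 : ℝ) else 0)

include hp hmarg hindep hv0 hv2 in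
lemma step (F : (ℕ → Fin (d + 1)) → ℝ) (hF : Integrable F μ) (k : ℕ) (ω : ℕ → Fin (d+1)) :
    ∑ j, condE d μ k (fdGrad d p v F k j) ω * v k (ω k) j
      = condE d μ (k+1) F ω - condE d μ k F ω := by
  classical
  set y := proj d k ω with hy
  set C := Cyl d k y with hC
  set m := (μ C).toReal with hm
  have hm0 : 0 < m := toReal_meas_Cyl_pos hp hmarg hindep k y
  set b := ω k with hb
  set I : Fin (d+1) → ℝ := fun a => ∫ x in C ∩ {x | x k = a}, F x ∂μ with hI
  have hpb := hp k b
  -- integral of the gradient over the cylinder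
  have h1 : ∀ j, ∫ x in C, fdGrad d p v F k j x ∂μ = ∑ i, v k i j * I i := by
    intro j
    calc ∫ x in C, fdGrad d p v F k j x ∂μ
        = ∑ i, ∫ x in C, p k i * v k i j * F (Function.update x k i) ∂μ := by
          rw [← integral_finset_sum _ (fun i _ =>
            (((integrable_comp_update hp hmarg hindep hF k i).const_mul
              (p k i * v k i j))).integrableOn)]
          rfl
      _ = ∑ i, v k i j * I i := by
          refine Finset.sum_congr rfl fun i _ => ?_
          rw [integral_const_mul]
          have hupd := setIntegral_update_cyl hp hmarg hindep hF k i y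
          calc p k i * v k i j * ∫ x in C, F (Function.update x k i) ∂μ
              = v k i j * (p k i * ∫ x in C, F (Function.update x k i) ∂μ) := by ring
            _ = v k i j * I i := by rw [hupd]
  have hsum1 : ∑ a, p k a = 1 := psum hp hmarg k
  have hvv := vv (fun a => hp k a) hsum1 (hv0 k) (hv2 k)
  have h2 : ∑ j, condE d μ k (fdGrad d p v F k j) ω * v k (ω k) j
      = (∑ i, ((if i = b then 1 / p k i else 0) - 1) * I i) / m := by
    have hce : ∀ j, condE d μ k (fdGrad d p v F k j) ω
        = (∑ i, v k i j * I i) / m := by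
      intro j
      rw [condE_eq_cval, cval, ← hy, ← hC, ← hm, h1 j]
    simp only [hce, ← hb]
    calc ∑ j, ((∑ i, v k i j * I i) / m) * v k b j
        = (∑ j, ∑ i, (v k i j * v k b j) * I i) / m := by
          rw [Finset.sum_div]
          refine Finset.sum_congr rfl fun j _ => ?_
          rw [div_mul_eq_mul_div, Finset.sum_mul]
          congr 1
          exact Finset.sum_congr rfl fun i _ => by ring
      _ = (∑ i, ∑ j, (v k i j * v k b j) * I i) / m := by rw [Finset.sum_comm]
      _ = (∑ i, ((if i = b then 1 / p k i else 0) - 1) * I i) / m := by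
          congr 1
          refine Finset.sum_congr rfl fun i _ => ?_
          rw [← Finset.sum_mul, hvv i b]
  have h3 : ∑ i, ((if i = b then 1 / p k i else 0) - 1) * I i
      = I b / p k b - ∫ x in C, F x ∂μ := by
    have : ∀ i, ((if i = b then 1 / p k i else 0) - 1) * I i
        = (if i = b then 1 / p k b * I i else 0) - I i := by
      intro i
      by_cases h : i = b
      · subst h; simp; ring
      · simp [h]
    simp only [this]
    rw [Finset.sum_sub_distrib, Finset.sum_ite_eq' Finset.univ b (fun i => 1 / p k b * I i)]
    simp only [Finset.mem_univ, if_pos]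
    rw [← setIntegral_partition hF k y]
    ring
  have h4 : condE d μ (k+1) F ω = I b / (m * p k b) := by
    rw [condE_eq_cval, cval, Cyl_succ k ω, ← hy, ← hC]
    have hmeq : μ (C ∩ {x | x k = ω k}) = μ C * ENNReal.ofReal (p k b) := by
      have := meas_Cyl_succ hmarg hindep k ω
      rw [Cyl_succ k ω, ← hy, ← hC] at this
      rw [this, hb]
    rw [hmeq, ENNReal.toReal_mul, ENNReal.toReal_ofReal hpb.le, ← hm, ← hb]
  have h5 : condE d μ k F ω = (∫ x in C, F x ∂μ) / m := by
    rw [condE_eq_cval, cval, ← hy, ← hC, ← hm]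
  rw [h2, h3, h4, h5]
  field_simp

end Step

section Telescope

variable (hp : ∀ k a, 0 < p k a)
  (hmarg : ∀ k a, μ {ω | ω k = a} = ENNReal.ofReal (p k a))
  (hindep : iIndepFun (fun k (ω : ℕ → Fin (d + 1)) => ω k) μ)
  (v : ℕ → Fin (d + 1) → Fin d → ℝ)
  (hv0 : ∀ k j, ∑ a, p k a * v k a j = 0)
  (hv2 : ∀ k j l, ∑ a, p k a * v k a j * v k a l = if j = l then (1 : ℝ) else 0)

lemma condE_zero (f : (ℕ → Fin (d+1)) → ℝ) (ω : ℕ → Fin (d+1)) :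
    condE d μ 0 f ω = ∫ x, f x ∂μ := by
  have hC : Cyl d 0 (proj d 0 ω) = Set.univ := by
    ext x
    simp only [Cyl, Set.mem_setOf_eq, Set.mem_univ, iff_true]
    exact fun i => i.elim0
  rw [condE, hC, measure_univ, setIntegral_univ]
  simp

include hp hmarg hindep hv0 hv2 in
lemma telescope (F : (ℕ → Fin (d + 1)) → ℝ) (hF : Integrable F μ) (N : ℕ) (ω : ℕ → Fin (d+1)) :
    ∑ k ∈ Finset.range N, ∑ j, condE d μ k (fdGrad d p v F k j) ω * v k (ω k) j
      = condE d μ N F ω - ∫ x, F x ∂μ := by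
  induction N with
  | zero => simp [condE_zero F ω]
  | succ n ih =>
    rw [Finset.sum_range_succ, ih, step hp hmarg hindep v hv0 hv2 F hF n ω]
    ring

end Telescope

section Contraction

variable (hp : ∀ k a, 0 < p k a)
  (hmarg : ∀ k a, μ {ω | ω k = a} = ENNReal.ofReal (p k a))
  (hindep : iIndepFun (fun k (ω : ℕ → Fin (d + 1)) => ω k) μ)

lemma memLp_condE (n : ℕ) (f : (ℕ → Fin (d+1)) → ℝ) : MemLp (condE d μ n f) 2 μ := by
  have : condE d μ n f
      = fun ω => ∑ y : Fin n → Fin (d+1), Set.indicator (Cyl d n y) (fun _ => cval d μ n f y) ω :=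
    funext (condE_repr n f)
  rw [this]
  exact memLp_finset_sum _ fun y _ =>
    MemLp.indicator (measurableSet_Cyl n y) (memLp_const (μ := μ) (p := 2) (cval d μ n f y))

include hp hmarg hindep in
lemma integral_sq_condE_le (n : ℕ) (f : (ℕ → Fin (d+1)) → ℝ) (hf2 : MemLp f 2 μ) :
    ∫ x, (condE d μ n f x) ^ 2 ∂μ ≤ ∫ x, f x ^ 2 ∂μ := by
  classical
  have hf : Integrable f μ := hf2.integrable one_le_two
  have hfsq : Integrable (fun x => f x ^ 2) μ := hf2.integrable_sq
  have hcesq : Integrable (fun x => (condE d μ n f x) ^ 2) μ :=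
    (memLp_condE n f).integrable_sq
  have hU : (Set.univ : Set (ℕ → Fin (d+1)))
      = ⋃ y ∈ (Finset.univ : Finset (Fin n → Fin (d+1))), Cyl d n y := by
    refine le_antisymm (fun x _ => Set.mem_biUnion (Finset.mem_univ (proj d n x))
      (self_mem_Cyl n x)) le_top
  have hsplit : ∀ (g : (ℕ → Fin (d+1)) → ℝ), Integrable g μ →
      ∫ x, g x ∂μ = ∑ y : Fin n → Fin (d+1), ∫ x in Cyl d n y, g x ∂μ := by
    intro g hg
    rw [← setIntegral_univ, hU]
    exact integral_biUnion_finset _ (fun y _ => measurableSet_Cyl n y)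
      (fun y _ y' _ h => Cyl_disjoint h) (fun y _ => hg.integrableOn)
  rw [hsplit _ hcesq, hsplit _ hfsq]
  refine Finset.sum_le_sum fun y _ => ?_
  set C := Cyl d n y with hCdef
  set mC := (μ C).toReal with hmC
  have hm0 : 0 < mC := toReal_meas_Cyl_pos hp hmarg hindep n y
  set c := cval d μ n f y with hc
  have hCm : MeasurableSet C := measurableSet_Cyl n y
  have hfc : ∫ x in C, f x ∂μ = c * mC := by
    rw [hc, cval, ← hCdef, ← hmC, div_mul_cancel₀ _ hm0.ne']
  have hconst : ∀ x ∈ C, (condE d μ n f x) ^ 2 = c ^ 2 := by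
    intro x hx
    rw [condE_eq_cval, mem_Cyl.mp hx, ← hc]
  rw [setIntegral_congr_fun hCm hconst, setIntegral_const, smul_eq_mul, measureReal_def, ← hmC]
  have hexp : ∫ x in C, (f x - c) ^ 2 ∂μ
      = ∫ x in C, f x ^ 2 ∂μ - 2 * c * (∫ x in C, f x ∂μ) + c ^ 2 * mC := by
    have h1 : ∀ x, (f x - c) ^ 2 = f x ^ 2 - 2 * c * f x + c ^ 2 := fun x => by ring
    simp only [h1]
    rw [integral_add (by
        exact (hfsq.integrableOn).sub ((hf.integrableOn).const_mul (2 * c)))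
      (integrableOn_const (C := c ^ 2) (measure_ne_top μ C)),
      integral_sub hfsq.integrableOn ((hf.integrableOn).const_mul (2 * c)),
      integral_const_mul, setIntegral_const, smul_eq_mul, measureReal_def, ← hmC]
    ring
  have hnn : 0 ≤ ∫ x in C, (f x - c) ^ 2 ∂μ :=
    setIntegral_nonneg hCm fun x _ => sq_nonneg _
  rw [hexp, hfc] at hnn
  nlinarith [hnn]

include hp hmarg hindep in
lemma eLpNorm_condE_le (n : ℕ) (f : (ℕ → Fin (d+1)) → ℝ) (hf2 : MemLp f 2 μ) :
    eLpNorm (condE d μ n f) 2 μ ≤ eLpNorm f 2 μ := by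
  have h2 : ((2 : ℝ≥0∞)).toReal = (2 : ℝ) := by norm_num
  rw [(memLp_condE n f).eLpNorm_eq_integral_rpow_norm two_ne_zero ENNReal.ofNat_ne_top,
    hf2.eLpNorm_eq_integral_rpow_norm two_ne_zero ENNReal.ofNat_ne_top]
  apply ENNReal.ofReal_le_ofReal
  rw [h2]
  have hmono : ∫ x, ‖condE d μ n f x‖ ^ (2:ℝ) ∂μ ≤ ∫ x, ‖f x‖ ^ (2:ℝ) ∂μ := by
    have e1 : ∀ (g : (ℕ → Fin (d+1)) → ℝ) (x : _), ‖g x‖ ^ (2:ℝ) = g x ^ 2 := by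
      intro g x
      rw [show (2:ℝ) = ((2:ℕ):ℝ) by norm_num, Real.rpow_natCast]
      rw [Real.norm_eq_abs, sq_abs]
    simp only [e1]
    exact integral_sq_condE_le hp hmarg hindep n f hf2
  have hnn : 0 ≤ ∫ x, ‖condE d μ n f x‖ ^ (2:ℝ) ∂μ :=
    integral_nonneg fun x => Real.rpow_nonneg (norm_nonneg _) _
  exact Real.rpow_le_rpow hnn hmono (by norm_num)

end Contraction

section Levy

def filt (d : ℕ) : Filtration ℕ (inferInstance : MeasurableSpace (ℕ → Fin (d+1))) where
  seq := fun n => Fprev (coordFilt d) n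
  mono' := by
    intro m n hmn
    intro s hs
    obtain ⟨T, rfl⟩ := (measurableSet_Fprev_iff m s).mp hs
    refine (measurableSet_Fprev_iff n _).mpr
      ⟨(fun y : Fin n → Fin (d+1) => (fun i : Fin m => y ⟨i.1, lt_of_lt_of_le i.2 hmn⟩)) ⁻¹' T, ?_⟩
    rfl
  le' := fun n => Fprev_le n

lemma iSup_filt : (⨆ n, Fprev (coordFilt d) n) = (inferInstance : MeasurableSpace (ℕ → Fin (d+1))) := by
  refine le_antisymm (iSup_le fun n => Fprev_le n) ?_
  rw [show (inferInstance : MeasurableSpace (ℕ → Fin (d+1))) = MeasurableSpace.pi from rfl,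
    MeasurableSpace.pi_eq_generateFrom_projections]
  refine MeasurableSpace.generateFrom_le ?_
  rintro E ⟨l, T, -, rfl⟩
  refine le_iSup (fun n => Fprev (coordFilt d) n) (l+1) _ ?_
  refine (measurableSet_Fprev_iff (l+1) _).mpr
    ⟨(fun y : Fin (l+1) → Fin (d+1) => y ⟨l, Nat.lt_succ_self l⟩) ⁻¹' T, ?_⟩
  rfl

end Levy

end CO

/-- Clark–Ocone formula for an obtuse random walk:
`F = E[F] + Σ_k ⟨E[D_k F | F_{k-1}], Y_k⟩`, with convergence in `L²(Ω)`. -/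
theorem stmt_13 (d : ℕ) (μ : Measure (ℕ → Fin (d + 1))) [IsProbabilityMeasure μ]
    (p : ℕ → Fin (d + 1) → ℝ) (v : ℕ → Fin (d + 1) → Fin d → ℝ)
    (hp : ∀ k a, 0 < p k a)
    (hmarg : ∀ k a, μ {ω | ω k = a} = ENNReal.ofReal (p k a))
    (hindep : iIndepFun (fun k (ω : ℕ → Fin (d + 1)) => ω k) μ)
    (hv0 : ∀ k j, ∑ a, p k a * v k a j = 0)
    (hv2 : ∀ k j l, ∑ a, p k a * v k a j * v k a l = if j = l then (1 : ℝ) else 0)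
    (F : (ℕ → Fin (d + 1)) → ℝ) (hF : MemLp F 2 μ) :
    Tendsto
      (fun N => eLpNorm
        (fun ω => F ω - ∫ x, F x ∂μ -
          ∑ k ∈ Finset.range N, ∑ j,
            (μ[fdGrad d p v F k j | Fprev (coordFilt d) k]) ω * v k (ω k) j) 2 μ)
      atTop (nhds 0) := by
  classical
  have hFint : Integrable F μ := hF.integrable one_le_two
  have hgrad : ∀ k j, Integrable (fdGrad d p v F k j) μ := by
    intro k j
    have h : fdGrad d p v F k j
        = fun ω => ∑ i, p k i * v k i j * F (Function.update ω k i) := rfl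
    rw [h]
    exact integrable_finset_sum _ fun i _ =>
      (CO.integrable_comp_update hp hmarg hindep hFint k i).const_mul _
  -- identify the conditional expectations with condE, a.e.
  have hae : ∀ᵐ ω ∂μ, ∀ (k : ℕ) (j : Fin d),
      (μ[fdGrad d p v F k j | Fprev (coordFilt d) k]) ω
        = CO.condE d μ k (fdGrad d p v F k j) ω := by
    rw [ae_all_iff]
    intro k
    rw [ae_all_iff]
    intro j
    exact (CO.condE_ae_eq_condexp hp hmarg hindep k _ (hgrad k j)).symm.mono fun ω h => h.symm ▸ rfl
  have hcongr : ∀ N, eLpNorm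
        (fun ω => F ω - ∫ x, F x ∂μ -
          ∑ k ∈ Finset.range N, ∑ j,
            (μ[fdGrad d p v F k j | Fprev (coordFilt d) k]) ω * v k (ω k) j) 2 μ
      = eLpNorm (fun ω => F ω - CO.condE d μ N F ω) 2 μ := by
    intro N
    apply eLpNorm_congr_ae
    filter_upwards [hae] with ω hω
    have hsum : ∑ k ∈ Finset.range N, ∑ j,
          (μ[fdGrad d p v F k j | Fprev (coordFilt d) k]) ω * v k (ω k) j
        = ∑ k ∈ Finset.range N, ∑ j,
          CO.condE d μ k (fdGrad d p v F k j) ω * v k (ω k) j := by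
      refine Finset.sum_congr rfl fun k _ => Finset.sum_congr rfl fun j _ => ?_
      rw [hω k j]
    rw [hsum, CO.telescope hp hmarg hindep v hv0 hv2 F hFint N ω]
    ring
  have hfun : (fun N => eLpNorm
        (fun ω => F ω - ∫ x, F x ∂μ -
          ∑ k ∈ Finset.range N, ∑ j,
            (μ[fdGrad d p v F k j | Fprev (coordFilt d) k]) ω * v k (ω k) j) 2 μ)
      = fun N => eLpNorm (fun ω => F ω - CO.condE d μ N F ω) 2 μ := funext hcongr
  rw [hfun, ENNReal.tendsto_nhds_zero]
  intro ε hε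
  set δ : ℝ≥0∞ := min (ε / 3) 1 with hδdef
  have hδ0 : δ ≠ 0 := by
    simp only [hδdef, ne_eq, min_eq_iff]
    intro h
    rcases h with ⟨h, -⟩ | ⟨h, -⟩
    · exact absurd h (ENNReal.div_pos hε.ne' (by norm_num)).ne'
    · norm_num at h
  have hδ3 : δ ≤ ε / 3 := min_le_left _ _
  -- simple function approximation
  obtain ⟨g, hgdist, hgmem⟩ := hF.exists_simpleFunc_eLpNorm_sub_lt ENNReal.ofNat_ne_top hδ0
  have hgint : Integrable (⇑g) μ := hgmem.integrable one_le_two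
  obtain ⟨Cg, hCg⟩ := g.exists_forall_norm_le
  set B : ℝ := max Cg 0 with hBdef
  have hgB : ∀ x, ‖g x‖ ≤ B := fun x => (hCg x).trans (le_max_left _ _)
  have hB0 : 0 ≤ B := le_max_right _ _
  set c : ℝ≥0∞ := ENNReal.ofReal (2 * B + 1) with hcdef
  have hc0 : c ≠ 0 := by
    simp only [hcdef, ne_eq, ENNReal.ofReal_eq_zero, not_le]
    linarith
  have hctop : c ≠ ⊤ := ENNReal.ofReal_ne_top
  -- Lévy's upward theorem in L¹ for g
  have hgsm : StronglyMeasurable[⨆ n, CO.filt d n] (⇑g) := by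
    have h1 : (⨆ n, CO.filt d n) = (inferInstance : MeasurableSpace (ℕ → Fin (d+1))) :=
      CO.iSup_filt
    rw [h1]
    exact g.stronglyMeasurable
  have levy := hgint.tendsto_eLpNorm_condExp hgsm
  have hlevy' : Tendsto (fun n => eLpNorm (fun ω => g ω - CO.condE d μ n (⇑g) ω) 1 μ)
      atTop (nhds 0) := by
    refine levy.congr fun n => ?_
    have h1 : (μ[⇑g | CO.filt d n] - ⇑g) =ᵐ[μ]
        (fun ω => CO.condE d μ n (⇑g) ω - g ω) := by
      have h2 : CO.condE d μ n (⇑g) =ᵐ[μ] μ[⇑g | Fprev (coordFilt d) n] :=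
        CO.condE_ae_eq_condexp hp hmarg hindep n (⇑g) hgint
      filter_upwards [h2] with ω hω
      simp only [Pi.sub_apply]
      rw [show (μ[⇑g | CO.filt d n]) ω = (μ[⇑g | Fprev (coordFilt d) n]) ω from rfl, ← hω]
    rw [eLpNorm_congr_ae h1, ← eLpNorm_neg]
    congr 1
    funext ω
    simp
  -- pointwise bound on condE of g
  have hcondEB : ∀ n ω, ‖CO.condE d μ n (⇑g) ω‖ ≤ B := by
    intro n ω
    rw [CO.condE]
    have hμC : 0 < (μ (CO.Cyl d n (CO.proj d n ω))).toReal :=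
      CO.toReal_meas_Cyl_pos hp hmarg hindep n _
    rw [norm_div]
    have hnum : ‖∫ x in CO.Cyl d n (CO.proj d n ω), g x ∂μ‖
        ≤ B * (μ (CO.Cyl d n (CO.proj d n ω))).toReal :=
      norm_setIntegral_le_of_norm_le_const (measure_lt_top μ _) (fun x _ => hgB x)
    rw [Real.norm_eq_abs (((μ (CO.Cyl d n (CO.proj d n ω)))).toReal),
      abs_of_pos hμC, div_le_iff₀ hμC]
    exact hnum
  -- second term estimate: L² from L¹ via boundedness
  have hterm2 : ∀ n, eLpNorm (fun ω => g ω - CO.condE d μ n (⇑g) ω) 2 μ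
      ≤ (c * eLpNorm (fun ω => g ω - CO.condE d μ n (⇑g) ω) 1 μ) ^ ((1:ℝ)/2) := by
    intro n
    set h : (ℕ → Fin (d+1)) → ℝ := fun ω => g ω - CO.condE d μ n (⇑g) ω with hhdef
    have hbd : ∀ ω, (‖h ω‖₊ : ℝ≥0∞) ≤ c := by
      intro ω
      rw [hcdef, ← ENNReal.ofReal_coe_nnreal]
      apply ENNReal.ofReal_le_ofReal
      simp only [coe_nnnorm, hhdef]
      calc ‖g ω - CO.condE d μ n (⇑g) ω‖ ≤ ‖g ω‖ + ‖CO.condE d μ n (⇑g) ω‖ := norm_sub_le _ _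
        _ ≤ B + B := add_le_add (hgB ω) (hcondEB n ω)
        _ ≤ 2 * B + 1 := by linarith
    rw [eLpNorm_eq_lintegral_rpow_enorm_toReal two_ne_zero ENNReal.ofNat_ne_top,
      eLpNorm_one_eq_lintegral_enorm]
    have htoReal : ((2:ℝ≥0∞)).toReal = (2:ℝ) := by norm_num
    rw [htoReal]
    refine ENNReal.rpow_le_rpow ?_ (by norm_num)
    calc ∫⁻ x, (‖h x‖₊ : ℝ≥0∞) ^ (2:ℝ) ∂μ
        = ∫⁻ x, (‖h x‖₊ : ℝ≥0∞) * (‖h x‖₊ : ℝ≥0∞) ∂μ := by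
          refine lintegral_congr fun x => ?_
          rw [show (2:ℝ) = ((2:ℕ):ℝ) by norm_num, ENNReal.rpow_natCast, pow_two]
      _ ≤ ∫⁻ x, c * (‖h x‖₊ : ℝ≥0∞) ∂μ := by
          refine lintegral_mono fun x => ?_
          exact mul_le_mul_left (hbd x) _
      _ = c * ∫⁻ x, (‖h x‖₊ : ℝ≥0∞) ∂μ := lintegral_const_mul' _ _ hctop
  -- eventually the L¹ norm is small
  have hsmall : ∀ᶠ n in atTop,
      eLpNorm (fun ω => g ω - CO.condE d μ n (⇑g) ω) 1 μ ≤ δ ^ (2:ℝ) / c := by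
    have hpos : (0:ℝ≥0∞) < δ ^ (2:ℝ) / c := by
      refine ENNReal.div_pos ?_ hctop
      simp only [ne_eq, ENNReal.rpow_eq_zero_iff, not_or]
      constructor
      · intro ⟨h, _⟩; exact hδ0 h
      · intro ⟨h, _⟩
        exact absurd h (by
          intro hh
          have : δ ≤ 1 := min_le_right _ _
          rw [hh] at this
          exact absurd this (by norm_num))
    exact (ENNReal.tendsto_nhds_zero.mp hlevy') _ hpos
  -- measurability facts
  have hmF : AEStronglyMeasurable F μ := hF.aestronglyMeasurable
  have hmg : AEStronglyMeasurable (⇑g) μ := g.stronglyMeasurable.aestronglyMeasurable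
  have hmc : ∀ n (f : (ℕ → Fin (d+1)) → ℝ),
      AEStronglyMeasurable (CO.condE d μ n f) μ :=
    fun n f => ((CO.stronglyMeasurable_condE n f).mono (CO.Fprev_le n)).aestronglyMeasurable
  filter_upwards [hsmall] with n hn
  -- decomposition into three terms
  have hdecomp : (fun ω => F ω - CO.condE d μ n F ω)
      = (fun ω => (F ω - g ω) + ((g ω - CO.condE d μ n (⇑g) ω)
          + (CO.condE d μ n (⇑g) ω - CO.condE d μ n F ω))) := by
    funext ω; ring
  have htri : eLpNorm (fun ω => F ω - CO.condE d μ n F ω) 2 μ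
      ≤ eLpNorm (fun ω => F ω - g ω) 2 μ
        + (eLpNorm (fun ω => g ω - CO.condE d μ n (⇑g) ω) 2 μ
          + eLpNorm (fun ω => CO.condE d μ n (⇑g) ω - CO.condE d μ n F ω) 2 μ) := by
    rw [hdecomp]
    refine le_trans (eLpNorm_add_le (hmF.sub hmg) ((hmg.sub (hmc n _)).add
      ((hmc n _).sub (hmc n _))) one_le_two) ?_
    exact add_le_add le_rfl (eLpNorm_add_le (hmg.sub (hmc n _))
      ((hmc n _).sub (hmc n _)) one_le_two)
  -- term 1
  have h1 : eLpNorm (fun ω => F ω - g ω) 2 μ ≤ δ := by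
    have : eLpNorm (fun ω => F ω - g ω) 2 μ = eLpNorm (F - ⇑g) 2 μ := rfl
    rw [this]
    exact hgdist.le
  -- term 3
  have h3 : eLpNorm (fun ω => CO.condE d μ n (⇑g) ω - CO.condE d μ n F ω) 2 μ ≤ δ := by
    have hsub : (fun ω => CO.condE d μ n (⇑g) ω - CO.condE d μ n F ω)
        = CO.condE d μ n (fun x => g x - F x) := by
      funext ω
      rw [CO.condE, CO.condE, CO.condE, div_sub_div_same,
        ← integral_sub hgint.integrableOn hFint.integrableOn]
    rw [hsub]
    refine le_trans (CO.eLpNorm_condE_le hp hmarg hindep n _ (hgmem.sub hF)) ?_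
    have : eLpNorm (fun x => g x - F x) 2 μ = eLpNorm (F - ⇑g) 2 μ := by
      rw [← eLpNorm_neg]
      congr 1
      funext x
      simp [Pi.sub_apply]
    rw [this]
    exact hgdist.le
  -- term 2
  have h2 : eLpNorm (fun ω => g ω - CO.condE d μ n (⇑g) ω) 2 μ ≤ δ := by
    refine le_trans (hterm2 n) ?_
    calc (c * eLpNorm (fun ω => g ω - CO.condE d μ n (⇑g) ω) 1 μ) ^ ((1:ℝ)/2)
        ≤ (c * (δ ^ (2:ℝ) / c)) ^ ((1:ℝ)/2) := by
          refine ENNReal.rpow_le_rpow ?_ (by norm_num)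
          exact mul_le_mul_right hn _
      _ ≤ (δ ^ (2:ℝ)) ^ ((1:ℝ)/2) := by
          refine ENNReal.rpow_le_rpow ?_ (by norm_num)
          exact ENNReal.mul_div_le
      _ = δ := by
          rw [← ENNReal.rpow_mul]
          norm_num
  calc eLpNorm (fun ω => F ω - CO.condE d μ n F ω) 2 μ
      ≤ δ + (δ + δ) := le_trans htri (add_le_add h1 (add_le_add h2 h3))
    _ ≤ ε / 3 + (ε / 3 + ε / 3) := add_le_add hδ3 (add_le_add hδ3 hδ3)
    _ = ε := by rw [← add_assoc]; exact ENNReal.add_thirds ε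

end
end

section
/- Predictable representation property: if (M_n) is an R^d-valued L² martingale with respect to the filtration of an obtuse random walk, then there exists a predictable process (γ_k) with values in d×d matrices such that M_n^i = M_{-1}^i + Σ_{k=0}^n ⟨γ_k^i, Y_k⟩ for all n and i ∈ {1,...,d}, and one may take γ_k^i = E[D_k M_k^i | F_{k-1}]. -/
open MeasureTheory Finset ProbabilityTheory Filter

noncomputable section

open Matrix

lemma dual_orth {d : ℕ} (p : Fin (d+1) → ℝ) (v : Fin (d+1) → Fin d → ℝ)
    (hp : ∀ a, 0 < p a) (hsum : ∑ a, p a = 1)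
    (hv0 : ∀ j, ∑ a, p a * v a j = 0)
    (hv2 : ∀ j l, ∑ a, p a * v a j * v a l = if j = l then (1:ℝ) else 0) :
    ∀ a b, p b * (1 + ∑ j, v a j * v b j) = if a = b then 1 else 0 := by
  classical
  set w : Fin (d+1) → Fin (d+1) → ℝ := fun a c => Fin.cases 1 (fun j => v a j) c with hw
  set U := (Matrix.of (fun a c => Real.sqrt (p a) * w a c) :
    Matrix (Fin (d+1)) (Fin (d+1)) ℝ) with hU
  have hUtU : Uᵀ * U = 1 := by
    ext c c'
    rw [Matrix.mul_apply, Matrix.one_apply]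
    have hterm : ∀ a, Uᵀ c a * U a c' = p a * (w a c * w a c') := by
      intro a
      simp only [Matrix.transpose_apply, hU, Matrix.of_apply]
      conv_rhs => rw [← Real.mul_self_sqrt (hp a).le]
      ring
    rw [Finset.sum_congr rfl fun a _ => hterm a]
    induction c using Fin.cases with
    | zero =>
      induction c' using Fin.cases with
      | zero => simpa [hw] using hsum
      | succ j =>
        rw [if_neg (Fin.succ_ne_zero j).symm]
        simpa [hw] using hv0 j
    | succ j =>
      induction c' using Fin.cases with
      | zero =>
        rw [if_neg (Fin.succ_ne_zero j)]
        simpa [hw, mul_comm, mul_assoc, mul_left_comm] using hv0 j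
      | succ l =>
        simp only [Fin.succ_inj]
        simpa [hw, mul_assoc] using hv2 j l
  have hUUt : U * Uᵀ = 1 := mul_eq_one_comm.mp hUtU
  intro a b
  have h : (U * Uᵀ) a b = (1 : Matrix (Fin (d+1)) (Fin (d+1)) ℝ) a b := by rw [hUUt]
  rw [Matrix.mul_apply, Matrix.one_apply] at h
  have hS : ∑ c, U a c * Uᵀ c b
      = Real.sqrt (p a) * Real.sqrt (p b) * (1 + ∑ j, v a j * v b j) := by
    simp only [Matrix.transpose_apply, hU, Matrix.of_apply]
    rw [Fin.sum_univ_succ]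
    simp only [hw, Fin.cases_zero, Fin.cases_succ]
    rw [mul_add, mul_one, Finset.mul_sum]
    congr 1
    · ring
    · exact Finset.sum_congr rfl fun j _ => by ring
  rw [hS] at h
  by_cases hab : a = b
  · subst hab
    rw [if_pos rfl] at h ⊢
    rwa [Real.mul_self_sqrt (hp a).le] at h
  · rw [if_neg hab] at h ⊢
    have ha : Real.sqrt (p a) ≠ 0 := (Real.sqrt_pos.mpr (hp a)).ne'
    have hb : Real.sqrt (p b) ≠ 0 := (Real.sqrt_pos.mpr (hp b)).ne'
    rcases mul_eq_zero.mp h with h' | h'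
    · exact absurd (mul_eq_zero.mp h') (by simp [ha, hb])
    · rw [h', mul_zero]

lemma recon {d : ℕ} (p : Fin (d+1) → ℝ) (v : Fin (d+1) → Fin d → ℝ)
    (hp : ∀ a, 0 < p a) (hsum : ∑ a, p a = 1)
    (hv0 : ∀ j, ∑ a, p a * v a j = 0)
    (hv2 : ∀ j l, ∑ a, p a * v a j * v a l = if j = l then (1:ℝ) else 0)
    (G : Fin (d+1) → ℝ) (a : Fin (d+1)) :
    G a = (∑ b, p b * G b) + ∑ j, (∑ b, p b * v b j * G b) * v a j := by
  have key := dual_orth p v hp hsum hv0 hv2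
  calc G a = ∑ b, G b * (p b * (1 + ∑ j, v a j * v b j)) := by
        rw [Finset.sum_congr rfl fun b _ => by rw [key a b]]
        simp [mul_ite, Finset.sum_ite_eq]
    _ = ∑ b, (p b * G b + ∑ j, (p b * v b j * G b) * v a j) := by
        refine Finset.sum_congr rfl fun b _ => ?_
        rw [show G b * (p b * (1 + ∑ j, v a j * v b j))
            = p b * G b + (G b * p b) * ∑ j, v a j * v b j from by ring,
          Finset.mul_sum]
        congr 1
        exact Finset.sum_congr rfl fun j _ => by ring
    _ = (∑ b, p b * G b) + ∑ j, (∑ b, p b * v b j * G b) * v a j := by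
        rw [Finset.sum_add_distrib]
        congr 1
        rw [Finset.sum_comm]
        exact Finset.sum_congr rfl fun j _ => by rw [Finset.sum_mul]



variable {d : ℕ} {μ : Measure (ℕ → Fin (d+1))}

lemma coordFilt_le (d n : ℕ) : coordFilt d n ≤ MeasurableSpace.pi :=
  Measurable.comap_le (measurable_pi_lambda
    (fun (ω : ℕ → Fin (d+1)) (k : Fin (n+1)) => ω (k : ℕ)) fun k => measurable_pi_apply _)

lemma coordFilt_mono {d m n : ℕ} (h : m ≤ n) : coordFilt d m ≤ coordFilt d n := by
  have hc : (fun ω : (ℕ → Fin (d+1)) => fun k : Fin (m+1) => ω k)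
      = (fun (x : Fin (n+1) → Fin (d+1)) (k : Fin (m+1)) => x (Fin.castLE (by omega) k))
        ∘ (fun ω (k : Fin (n+1)) => ω k) := rfl
  rw [coordFilt, coordFilt, hc, ← MeasurableSpace.comap_comp]
  exact MeasurableSpace.comap_mono
    (measurable_pi_lambda _ fun k => measurable_pi_apply _).comap_le

lemma Fprev_le_coordFilt (d k : ℕ) : Fprev (coordFilt d) k ≤ coordFilt d k := by
  cases k with
  | zero => exact bot_le
  | succ m => exact coordFilt_mono (Nat.le_succ m)

lemma Fprev_le_pi (d k : ℕ) : Fprev (coordFilt d) k ≤ MeasurableSpace.pi :=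
  (Fprev_le_coordFilt d k).trans (coordFilt_le d k)

lemma coordFilt_factor {d n : ℕ} {H : (ℕ → Fin (d+1)) → ℝ}
    (h : Measurable[coordFilt d n] H) {ω ω' : ℕ → Fin (d+1)}
    (hωω' : ∀ k : Fin (n+1), ω (k : ℕ) = ω' (k : ℕ)) : H ω = H ω' := by
  obtain ⟨S, -, hS⟩ := h (measurableSet_singleton (H ω))
  have hω : ω ∈ (fun ω (k : Fin (n + 1)) => ω (k : ℕ)) ⁻¹' S := by
    rw [hS]; exact rfl
  have hω' : ω' ∈ (fun ω (k : Fin (n + 1)) => ω (k : ℕ)) ⁻¹' S := by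
    have : (fun k : Fin (n+1) => ω' (k : ℕ)) = fun k : Fin (n+1) => ω (k : ℕ) :=
      funext fun k => (hωω' k).symm
    simpa [Set.mem_preimage, this] using hω
  rw [hS] at hω'
  exact (hω'.out).symm

lemma coordFilt_bound {d n : ℕ} {H : (ℕ → Fin (d+1)) → ℝ}
    (h : Measurable[coordFilt d n] H) : ∃ C, ∀ ω, |H ω| ≤ C := by
  classical
  refine ⟨Finset.univ.sup' ⟨fun _ => 0, Finset.mem_univ _⟩
    (fun x : Fin (n+1) → Fin (d+1) => |H fun m => if hm : m < n + 1 then x ⟨m, hm⟩ else 0|),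
    fun ω => ?_⟩
  have heq : H ω = H (fun m => if hm : m < n + 1 then ω m else 0) := by
    refine coordFilt_factor h fun k => ?_
    rw [dif_pos k.isLt]
  have h2 : (fun m => if hm : m < n + 1 then ω m else 0)
      = (fun m => if hm : m < n + 1 then (fun k : Fin (n+1) => ω (k : ℕ)) ⟨m, hm⟩ else 0) := rfl
  rw [heq, h2]
  exact Finset.le_sup'
    (fun x : Fin (n+1) → Fin (d+1) => |H fun m => if hm : m < n + 1 then x ⟨m, hm⟩ else 0|)
    (Finset.mem_univ (fun k : Fin (n+1) => ω (k : ℕ)))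

lemma coordFilt_integrable {d n : ℕ} {H : (ℕ → Fin (d+1)) → ℝ}
    (h : Measurable[coordFilt d n] H) (μ : Measure (ℕ → Fin (d+1))) [IsProbabilityMeasure μ] :
    Integrable H μ := by
  obtain ⟨C, hC⟩ := coordFilt_bound h
  exact (integrable_const C).mono'
    (h.mono (coordFilt_le d n) le_rfl).aestronglyMeasurable
    (Eventually.of_forall fun ω => by simpa [Real.norm_eq_abs] using hC ω)

lemma Fprev_update_mem {d k : ℕ} {s : Set (ℕ → Fin (d+1))}
    (hs : MeasurableSet[Fprev (coordFilt d) k] s) (ω : ℕ → Fin (d+1)) (a : Fin (d+1)) :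
    Function.update ω k a ∈ s ↔ ω ∈ s := by
  cases k with
  | zero => rcases MeasurableSpace.measurableSet_bot_iff.mp hs with rfl | rfl <;> simp
  | succ m =>
    obtain ⟨S, -, rfl⟩ := hs
    have hcoord : (fun j : Fin (m+1) => Function.update ω (m+1) a (j : ℕ))
        = fun j : Fin (m+1) => ω (j : ℕ) := by
      funext j
      rw [Function.update_apply, if_neg (by have := j.isLt; omega)]
    simp only [Set.mem_preimage, hcoord]

lemma Fprev_update_measurable {d k : ℕ} {H : (ℕ → Fin (d+1)) → ℝ}
    (h : Measurable[coordFilt d k] H) (a : Fin (d+1)) :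
    Measurable[Fprev (coordFilt d) k] fun ω => H (Function.update ω k a) := by
  cases k with
  | zero =>
    have hconst : (fun ω : ℕ → Fin (d+1) => H (Function.update ω 0 a))
        = fun _ => H (Function.update (fun _ => a) 0 a) := by
      funext ω
      refine coordFilt_factor h fun j => ?_
      have hj : (j : ℕ) = 0 := by have := j.isLt; omega
      rw [hj, Function.update_self, Function.update_self]
    rw [hconst]
    exact measurable_const
  | succ m =>
    set g : (Fin (m+1) → Fin (d+1)) → ℝ :=
      fun x => H (fun t => if ht : t < m + 1 then x ⟨t, ht⟩ else a) with hg
    have hcomp : (fun ω => H (Function.update ω (m+1) a))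
        = g ∘ (fun ω (j : Fin (m+1)) => ω (j : ℕ)) := by
      funext ω
      refine coordFilt_factor h fun j => ?_
      rw [Function.update_apply]
      simp only [Function.comp_apply, hg]
      rcases Nat.lt_or_ge (j : ℕ) (m+1) with hj | hj
      · rw [if_neg (by omega), dif_pos hj]
      · have hj' : (j : ℕ) = m + 1 := by have := j.isLt; omega
        rw [if_pos hj', dif_neg (by omega)]
    rw [hcomp]
    exact (measurable_of_finite g).comp (Measurable.of_comap_le le_rfl)

lemma coordFilt_update_measurable {d k : ℕ} {H : (ℕ → Fin (d+1)) → ℝ}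
    (h : Measurable[coordFilt d k] H) (a : Fin (d+1)) :
    Measurable[coordFilt d k] fun ω => H (Function.update ω k a) :=
  (Fprev_update_measurable h a).mono (Fprev_le_coordFilt d k) le_rfl

lemma coordFilt_coord_measurable (d k : ℕ) :
    Measurable[coordFilt d k] fun ω : ℕ → Fin (d+1) => ω k := by
  have : (fun ω : ℕ → Fin (d+1) => ω k)
      = (fun x : Fin (k+1) → Fin (d+1) => x ⟨k, Nat.lt_succ_self k⟩)
        ∘ (fun ω (j : Fin (k+1)) => ω (j : ℕ)) := rfl
  rw [this]
  exact (measurable_pi_apply _).comp (Measurable.of_comap_le le_rfl)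


lemma psum [IsProbabilityMeasure μ] (p : ℕ → Fin (d+1) → ℝ)
    (hp : ∀ k a, 0 < p k a)
    (hmarg : ∀ k a, μ {ω | ω k = a} = ENNReal.ofReal (p k a)) (k : ℕ) :
    ∑ a, p k a = 1 := by
  have hdisj : Pairwise (Function.onFun Disjoint
      fun a : Fin (d+1) => {ω : ℕ → Fin (d+1) | ω k = a}) := by
    intro a b hab
    simp only [Function.onFun, Set.disjoint_left]
    rintro ω h1 h2
    exact hab (h1.symm.trans h2)
  have hmeas : ∀ a : Fin (d+1), MeasurableSet {ω : ℕ → Fin (d+1) | ω k = a} := fun a => by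
    have h1 : {ω : ℕ → Fin (d+1) | ω k = a} = (fun ω : ℕ → Fin (d+1) => ω k) ⁻¹' {a} := rfl
    rw [h1]
    exact (measurable_pi_apply k) (measurableSet_singleton a)
  have huniv : (⋃ a, {ω : ℕ → Fin (d+1) | ω k = a}) = Set.univ := by
    ext ω; simp
  have hU := measure_iUnion (μ := μ) hdisj hmeas
  rw [huniv, measure_univ, tsum_fintype] at hU
  rw [← ENNReal.ofReal_eq_one, ENNReal.ofReal_sum_of_nonneg (fun a _ => (hp k a).le)]
  simp_rw [← hmarg k]
  exact hU.symm

lemma integral_update [IsProbabilityMeasure μ] (p : ℕ → Fin (d+1) → ℝ)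
    (hp : ∀ k a, 0 < p k a)
    (hmarg : ∀ k a, μ {ω | ω k = a} = ENNReal.ofReal (p k a))
    (hindep : iIndepFun (fun k (ω : ℕ → Fin (d + 1)) => ω k) μ)
    (k : ℕ) {H : (ℕ → Fin (d+1)) → ℝ} (h : Measurable[coordFilt d k] H) :
    ∫ ω, H ω ∂μ = ∑ a, p k a * ∫ ω, H (Function.update ω k a) ∂μ := by
  classical
  have hpt : ∀ ω, H ω = ∑ a, (if ω k = a then (1:ℝ) else 0) * H (Function.update ω k a) := by
    intro ω
    have hterm : ∀ a : Fin (d+1), (if ω k = a then (1:ℝ) else 0) * H (Function.update ω k a)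
        = if ω k = a then H (Function.update ω k a) else 0 := fun a => by
      split_ifs <;> simp
    rw [Finset.sum_congr rfl fun a _ => hterm a, Finset.sum_ite_eq]
    simp [Function.update_eq_self]
  have hHa : ∀ a, Measurable[coordFilt d k] fun ω => H (Function.update ω k a) :=
    coordFilt_update_measurable h
  have hind : ∀ a : Fin (d+1), Measurable[coordFilt d k]
      fun ω : ℕ → Fin (d+1) => (if ω k = a then (1:ℝ) else 0) := fun a =>
    Measurable.ite ((coordFilt_coord_measurable d k) (measurableSet_singleton a))
      measurable_const measurable_const
  have hg_int : ∀ a : Fin (d+1), Integrable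
      (fun ω => (if ω k = a then (1:ℝ) else 0) * H (Function.update ω k a)) μ :=
    fun a => coordFilt_integrable ((hind a).mul (hHa a)) μ
  calc ∫ ω, H ω ∂μ
      = ∫ ω, ∑ a, (if ω k = a then (1:ℝ) else 0) * H (Function.update ω k a) ∂μ :=
        integral_congr_ae (Eventually.of_forall fun ω => hpt ω)
    _ = ∑ a, ∫ ω, (if ω k = a then (1:ℝ) else 0) * H (Function.update ω k a) ∂μ :=
        integral_finset_sum _ fun a _ => hg_int a
    _ = ∑ a, p k a * ∫ ω, H (Function.update ω k a) ∂μ := by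
        refine Finset.sum_congr rfl fun a _ => ?_
        have hXY : IndepFun (fun ω (t : ↥(Finset.range k)) => ω (t : ℕ))
            (fun ω (t : ↥({k} : Finset ℕ)) => ω (t : ℕ)) μ :=
          hindep.indepFun_finset (Finset.range k) {k}
            (Finset.disjoint_singleton_right.mpr Finset.notMem_range_self)
            (fun i => measurable_pi_apply i)
        set φ := (fun z => H (fun t => if ht : t < k then z ⟨t, Finset.mem_range.mpr ht⟩ else a) :
          (↥(Finset.range k) → Fin (d+1)) → ℝ) with hφ
        set ψ := (fun z => if z ⟨k, Finset.mem_singleton_self k⟩ = a then (1:ℝ) else 0 :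
          (↥({k} : Finset ℕ) → Fin (d+1)) → ℝ) with hψ
        have hfeq : (fun ω => H (Function.update ω k a))
            = φ ∘ (fun ω (t : ↥(Finset.range k)) => ω (t : ℕ)) := by
          funext ω
          refine coordFilt_factor h fun j => ?_
          simp only [Function.comp_apply, hφ]
          rw [Function.update_apply]
          rcases Nat.lt_or_ge (j : ℕ) k with hj | hj
          · rw [if_neg (by omega), dif_pos hj]
          · have hj' : (j : ℕ) = k := by have := j.isLt; omega
            rw [if_pos hj', dif_neg (by omega)]
        have hgeq : (fun ω : ℕ → Fin (d+1) => (if ω k = a then (1:ℝ) else 0))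
            = ψ ∘ (fun ω (t : ↥({k} : Finset ℕ)) => ω (t : ℕ)) := rfl
        have hIF : IndepFun (fun ω : ℕ → Fin (d+1) => (if ω k = a then (1:ℝ) else 0))
            (fun ω => H (Function.update ω k a)) μ := by
          rw [hfeq, hgeq]
          exact (hXY.comp (measurable_of_finite φ) (measurable_of_finite ψ)).symm
        have hmul := hIF.integral_mul_eq_mul_integral
          ((hind a).mono (coordFilt_le d k) le_rfl).aestronglyMeasurable
          ((hHa a).mono (coordFilt_le d k) le_rfl).aestronglyMeasurable
        have hindint : ∫ ω, (if ω k = a then (1:ℝ) else 0) ∂μ = p k a := by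
          have hseq : (fun ω : ℕ → Fin (d+1) => if ω k = a then (1:ℝ) else 0)
              = Set.indicator {ω : ℕ → Fin (d+1) | ω k = a} (fun _ => (1:ℝ)) := by
            funext ω
            simp [Set.indicator_apply, Set.mem_setOf_eq]
          rw [hseq]
          have hms : MeasurableSet {ω : ℕ → Fin (d+1) | ω k = a} := by
            have h1 : {ω : ℕ → Fin (d+1) | ω k = a}
                = (fun ω : ℕ → Fin (d+1) => ω k) ⁻¹' {a} := rfl
            rw [h1]; exact (measurable_pi_apply k) (measurableSet_singleton a)
          have h2 := integral_indicator_const (E := ℝ) (1:ℝ) hms (μ := μ)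
          rw [measureReal_def, hmarg k a, smul_eq_mul, mul_one, ENNReal.toReal_ofReal (hp k a).le] at h2
          exact h2
        have hprod : ∫ ω, (if ω k = a then (1:ℝ) else 0) * H (Function.update ω k a) ∂μ
            = (∫ ω, (if ω k = a then (1:ℝ) else 0) ∂μ) * ∫ ω, H (Function.update ω k a) ∂μ :=
          hmul
        rw [hprod, hindint]

lemma avg_condexp [IsProbabilityMeasure μ] (p : ℕ → Fin (d+1) → ℝ)
    (hp : ∀ k a, 0 < p k a)
    (hmarg : ∀ k a, μ {ω | ω k = a} = ENNReal.ofReal (p k a))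
    (hindep : iIndepFun (fun k (ω : ℕ → Fin (d + 1)) => ω k) μ)
    (k : ℕ) {f : (ℕ → Fin (d+1)) → ℝ} (hf : Measurable[coordFilt d k] f) :
    (fun ω => ∑ a, p k a * f (Function.update ω k a)) =ᵐ[μ]
      μ[f | Fprev (coordFilt d) k] := by
  have hm : Fprev (coordFilt d) k ≤ (MeasurableSpace.pi :
      MeasurableSpace (ℕ → Fin (d+1))) := Fprev_le_pi d k
  have hAmeas : Measurable[Fprev (coordFilt d) k]
      fun ω => ∑ a, p k a * f (Function.update ω k a) :=
    Finset.measurable_sum _ fun a _ => (Fprev_update_measurable hf a).const_mul (p k a)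
  have hAint : Integrable (fun ω => ∑ a, p k a * f (Function.update ω k a)) μ :=
    coordFilt_integrable (hAmeas.mono (Fprev_le_coordFilt d k) le_rfl) μ
  refine ae_eq_condExp_of_forall_setIntegral_eq hm (coordFilt_integrable hf μ)
    (fun s _ _ => hAint.integrableOn) (fun s hs _ => ?_)
    hAmeas.stronglyMeasurable.aestronglyMeasurable
  have hs' : MeasurableSet s := hm s hs
  have hsk : MeasurableSet[coordFilt d k] s := Fprev_le_coordFilt d k s hs
  have hHmeas : Measurable[coordFilt d k] (s.indicator f) := hf.indicator hsk
  have hstar := integral_update p hp hmarg hindep k hHmeas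
  have hupd : ∀ (a : Fin (d+1)) ω, s.indicator f (Function.update ω k a)
      = s.indicator (fun ω => f (Function.update ω k a)) ω := by
    intro a ω
    by_cases hωs : ω ∈ s
    · rw [Set.indicator_of_mem ((Fprev_update_mem hs ω a).mpr hωs),
        Set.indicator_of_mem hωs]
    · rw [Set.indicator_of_notMem (fun hc => hωs ((Fprev_update_mem hs ω a).mp hc)),
        Set.indicator_of_notMem hωs]
  have hint_upd : ∀ a : Fin (d+1),
      Integrable (fun ω => f (Function.update ω k a)) μ :=
    fun a => coordFilt_integrable (coordFilt_update_measurable hf a) μ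
  calc ∫ ω in s, (∑ a, p k a * f (Function.update ω k a)) ∂μ
      = ∑ a, ∫ ω in s, p k a * f (Function.update ω k a) ∂μ :=
        integral_finset_sum _ fun a _ => ((hint_upd a).const_mul _).integrableOn
    _ = ∑ a, p k a * ∫ ω in s, f (Function.update ω k a) ∂μ := by
        exact Finset.sum_congr rfl fun a _ => integral_const_mul _ _
    _ = ∑ a, p k a * ∫ ω, s.indicator f (Function.update ω k a) ∂μ := by
        refine Finset.sum_congr rfl fun a _ => ?_
        rw [← integral_indicator hs']
        congr 1
        exact integral_congr_ae (Eventually.of_forall fun ω => (hupd a ω).symm)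
    _ = ∫ ω, s.indicator f ω ∂μ := hstar.symm
    _ = ∫ ω in s, f ω ∂μ := integral_indicator hs'

lemma fdGrad_condexp [IsProbabilityMeasure μ] (p : ℕ → Fin (d+1) → ℝ)
    (v : ℕ → Fin (d + 1) → Fin d → ℝ) (k : ℕ) (j : Fin d)
    {f : (ℕ → Fin (d+1)) → ℝ} (hf : Measurable[coordFilt d k] f) :
    μ[fdGrad d p v f k j | Fprev (coordFilt d) k] = fdGrad d p v f k j := by
  have hmeas : Measurable[Fprev (coordFilt d) k] (fdGrad d p v f k j) := by
    unfold fdGrad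
    exact Finset.measurable_sum _ fun a _ => (Fprev_update_measurable hf a).const_mul _
  exact condExp_of_stronglyMeasurable (Fprev_le_pi d k) hmeas.stronglyMeasurable
    (coordFilt_integrable (hmeas.mono (Fprev_le_coordFilt d k) le_rfl) μ)

lemma pointwise_repr (p : ℕ → Fin (d+1) → ℝ) (v : ℕ → Fin (d + 1) → Fin d → ℝ) (k : ℕ)
    (hp : ∀ a, 0 < p k a) (hsum : ∑ a, p k a = 1)
    (hv0 : ∀ j, ∑ a, p k a * v k a j = 0)
    (hv2 : ∀ j l, ∑ a, p k a * v k a j * v k a l = if j = l then (1:ℝ) else 0)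
    (H : (ℕ → Fin (d+1)) → ℝ) (ω : ℕ → Fin (d+1)) :
    H ω = (∑ a, p k a * H (Function.update ω k a))
      + ∑ j, fdGrad d p v H k j ω * v k (ω k) j := by
  have h := recon (p k) (v k) hp hsum hv0 hv2
    (fun a => H (Function.update ω k a)) (ω k)
  rw [Function.update_eq_self] at h
  exact h

/-- predictable representation property: any `ℝ^d`-valued `L²` martingale
`(M_n)` of the obtuse random walk filtration satisfies
`M_n^i = M_{-1}^i + Σ_{k=0}^n ⟨γ_k^i, Y_k⟩` with the predictable process
`γ_k^i = E[D_k M_k^i | F_{k-1}]`. -/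
theorem stmt_17 (d : ℕ) (μ : Measure (ℕ → Fin (d + 1))) [IsProbabilityMeasure μ]
    (p : ℕ → Fin (d + 1) → ℝ) (v : ℕ → Fin (d + 1) → Fin d → ℝ)
    (hp : ∀ k a, 0 < p k a)
    (hmarg : ∀ k a, μ {ω | ω k = a} = ENNReal.ofReal (p k a))
    (hindep : iIndepFun (fun k (ω : ℕ → Fin (d + 1)) => ω k) μ)
    (hv0 : ∀ k j, ∑ a, p k a * v k a j = 0)
    (hv2 : ∀ k j l, ∑ a, p k a * v k a j * v k a l = if j = l then (1 : ℝ) else 0)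
    (M : ℕ → (ℕ → Fin (d + 1)) → Fin d → ℝ)
    (hM2 : ∀ n i, MemLp (fun ω => M n ω i) 2 μ)
    (hMadp : ∀ n i, Measurable[coordFilt d n] fun ω => M n ω i)
    (hMmart : ∀ n i, μ[fun ω => M (n + 1) ω i | coordFilt d n] =ᵐ[μ] fun ω => M n ω i) :
    ∃ γ : ℕ → (ℕ → Fin (d + 1)) → Fin d → Fin d → ℝ,
      (∀ k i j, StronglyMeasurable[Fprev (coordFilt d) k] fun ω => γ k ω i j) ∧
      (∀ k i j, (fun ω => γ k ω i j) =ᵐ[μ]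
        μ[fdGrad d p v (fun ω => M k ω i) k j | Fprev (coordFilt d) k]) ∧
      (∀ n i, (fun ω => M n ω i) =ᵐ[μ]
        fun ω => (∫ x, M 0 x i ∂μ) +
          ∑ k ∈ Finset.range (n + 1), ∑ j, γ k ω i j * v k (ω k) j) := by
  refine ⟨fun k ω i j => (μ[fdGrad d p v (fun ω => M k ω i) k j | Fprev (coordFilt d) k]) ω,
    fun k i j => stronglyMeasurable_condExp, fun k i j => Eventually.of_forall fun ω => rfl, ?_⟩
  have key : ∀ (k : ℕ) (i : Fin d), (fun ω => M k ω i) =ᵐ[μ]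
      fun ω => (μ[fun ω => M k ω i | Fprev (coordFilt d) k]) ω
        + ∑ j, (μ[fdGrad d p v (fun ω => M k ω i) k j | Fprev (coordFilt d) k]) ω
            * v k (ω k) j := by
    intro k i
    have hA := avg_condexp p hp hmarg hindep k (hMadp k i)
    have hfd : ∀ j, μ[fdGrad d p v (fun ω => M k ω i) k j | Fprev (coordFilt d) k]
        = fdGrad d p v (fun ω => M k ω i) k j := fun j => fdGrad_condexp p v k j (hMadp k i)
    filter_upwards [hA] with ω hω
    have hpt := pointwise_repr p v k (hp k) (psum p hp hmarg k) (hv0 k) (hv2 k)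
      (fun ω => M k ω i) ω
    rw [hpt, hω]
    congr 1
    exact Finset.sum_congr rfl fun j _ => by rw [hfd j]
  intro n i
  induction n with
  | zero =>
    have h0 := key 0 i
    simp only [Fprev] at h0
    rw [condExp_bot] at h0
    refine h0.trans (Eventually.of_forall fun ω => ?_)
    simp only [Nat.zero_add, Finset.sum_range_one]
    rfl
  | succ n ih =>
    have hk := key (n + 1) i
    filter_upwards [hk, hMmart n i, ih] with ω h1 h2 h3
    rw [Finset.sum_range_succ, ← add_assoc, ← h3, ← h2]
    exact h1


end
end
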